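/- arXiv:math/0610735 — 3 statements merged into one kernel-verified Lean document; each statement's English description precedes it below -/
import Mathlib

section
/- Let n ≥ 2. The number of tuples (τ_{n−1},…,τ_1) of transpositions of {1,…,n} with τ_{n−1}∘⋯∘τ_1 = (1 2 ⋯ n) equals n^{n−2}. -/
open Equiv Equiv.Perm Finset

namespace Denes

variable {α : Type*} [DecidableEq α] [Fintype α] {σ : Perm α} {a b x y : α}

omit [DecidableEq α] [Fintype α] in
lemma pow_succ_apply (σ : Perm α) (k : ℕ) (x : α) :
    (σ ^ (k+1)) x = σ ((σ ^ k) x) := by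
  rw [pow_succ', Perm.mul_apply]

lemma sameCycle_swap_mul_self (h : ¬ σ.SameCycle a b) :
    (Equiv.swap a b * σ).SameCycle a b := by
  have hb : ∀ k : ℕ, (σ ^ k) a ≠ b := fun k hk => h ⟨k, by simpa using hk⟩
  have P : ∀ k : ℕ, (Equiv.swap a b * σ).SameCycle a ((σ ^ k) a) := by
    intro k
    induction k with
    | zero => simpa using SameCycle.refl _ _
    | succ k ih =>
      by_cases ht : σ ((σ ^ k) a) = a
      · have h2 : (σ ^ (k+1)) a = a := by rw [pow_succ_apply]; exact ht
        rw [h2]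
      · have hstep : (Equiv.swap a b * σ) ((σ ^ k) a) = (σ ^ (k+1)) a := by
          rw [Perm.mul_apply, pow_succ_apply]
          exact Equiv.swap_apply_of_ne_of_ne ht (by rw [← pow_succ_apply]; exact hb (k+1))
        exact ih.trans ⟨1, by simpa using hstep⟩
  have hm : (σ ^ (orderOf σ - 1 + 1)) a = a := by
    rw [Nat.sub_add_cancel (orderOf_pos σ), pow_orderOf_eq_one]; rfl
  have hlast : (Equiv.swap a b * σ) ((σ ^ (orderOf σ - 1)) a) = b := by
    have h3 : σ ((σ ^ (orderOf σ - 1)) a) = a := by rw [← pow_succ_apply]; exact hm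
    rw [Perm.mul_apply, h3, Equiv.swap_apply_left]
  exact (P (orderOf σ - 1)).trans ⟨1, by simpa using hlast⟩

lemma sameCycle_mono (hab' : (Equiv.swap a b * σ).SameCycle a b)
    (hxy : σ.SameCycle x y) : (Equiv.swap a b * σ).SameCycle x y := by
  have step : ∀ z : α, (Equiv.swap a b * σ).SameCycle z (σ z) := by
    intro z
    by_cases h1 : σ z = a
    · have h4 : (Equiv.swap a b * σ) z = b := by
        rw [Perm.mul_apply, h1, Equiv.swap_apply_left]
      have hzb : (Equiv.swap a b * σ).SameCycle z b := ⟨1, by simpa using h4⟩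
      rw [h1]; exact hzb.trans hab'.symm
    by_cases h2 : σ z = b
    · have h4 : (Equiv.swap a b * σ) z = a := by
        rw [Perm.mul_apply, h2, Equiv.swap_apply_right]
      have hza : (Equiv.swap a b * σ).SameCycle z a := ⟨1, by simpa using h4⟩
      rw [h2]; exact hza.trans hab'
    · refine ⟨1, ?_⟩
      simp only [zpow_one, Perm.mul_apply]
      exact Equiv.swap_apply_of_ne_of_ne h1 h2
  obtain ⟨k, -, hk⟩ := hxy.exists_pow_eq'
  clear hxy
  subst hk
  induction k with
  | zero => simpa using SameCycle.refl _ _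
  | succ k ih =>
    rw [pow_succ_apply]
    exact ih.trans (step _)

lemma sameCycle_swap_mul_iff (h : ¬ σ.SameCycle a b) :
    (Equiv.swap a b * σ).SameCycle x y ↔
      σ.SameCycle x y ∨ (σ.SameCycle x a ∧ σ.SameCycle y b) ∨
        (σ.SameCycle x b ∧ σ.SameCycle y a) := by
  have hab' := sameCycle_swap_mul_self h
  constructor
  · intro hxy
    obtain ⟨k, -, hk⟩ := hxy.exists_pow_eq'
    clear hxy
    subst hk
    induction k with
    | zero => exact Or.inl (by simpa using SameCycle.refl _ _)
    | succ k ih =>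
      have hstep : ((Equiv.swap a b * σ) ^ (k+1)) x
          = Equiv.swap a b (σ (((Equiv.swap a b * σ) ^ k) x)) := by
        rw [pow_succ_apply, Perm.mul_apply]
      set z := ((Equiv.swap a b * σ) ^ k) x with hz
      have hzσ : σ.SameCycle z (σ z) := ⟨1, by simp⟩
      rcases ih with hxz | ⟨hxa, hzb⟩ | ⟨hxb, hza⟩
      · by_cases h1 : σ z = a
        · rw [hstep, h1, Equiv.swap_apply_left]
          exact Or.inr (Or.inl ⟨hxz.trans (h1 ▸ hzσ), SameCycle.refl _ _⟩)
        by_cases h2 : σ z = b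
        · rw [hstep, h2, Equiv.swap_apply_right]
          exact Or.inr (Or.inr ⟨hxz.trans (h2 ▸ hzσ), SameCycle.refl _ _⟩)
        · rw [hstep, Equiv.swap_apply_of_ne_of_ne h1 h2]
          exact Or.inl (hxz.trans hzσ)
      · by_cases h1 : σ z = a
        · exact absurd ((hzb.symm.trans (h1 ▸ hzσ)).symm) h
        by_cases h2 : σ z = b
        · rw [hstep, h2, Equiv.swap_apply_right]
          exact Or.inl hxa
        · rw [hstep, Equiv.swap_apply_of_ne_of_ne h1 h2]
          exact Or.inr (Or.inl ⟨hxa, (hzσ.symm.trans hzb)⟩)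
      · by_cases h1 : σ z = a
        · rw [hstep, h1, Equiv.swap_apply_left]
          exact Or.inl hxb
        by_cases h2 : σ z = b
        · exact absurd (((h2 ▸ hzσ).symm.trans hza).symm) h
        · rw [hstep, Equiv.swap_apply_of_ne_of_ne h1 h2]
          exact Or.inr (Or.inr ⟨hxb, hzσ.symm.trans hza⟩)
  · rintro (hxy | ⟨hxa, hyb⟩ | ⟨hxb, hya⟩)
    · exact sameCycle_mono hab' hxy
    · exact ((sameCycle_mono hab' hxa).trans hab').trans (sameCycle_mono hab' hyb).symm
    · exact ((sameCycle_mono hab' hxb).trans hab'.symm).trans (sameCycle_mono hab' hya).symm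

/-- The orbit of `x` as a finset. -/
def orb (σ : Perm α) (x : α) : Finset α := Finset.univ.filter (σ.SameCycle x)

lemma mem_orb : y ∈ orb σ x ↔ σ.SameCycle x y := by simp [orb]

lemma self_mem_orb : x ∈ orb σ x := mem_orb.2 (SameCycle.refl _ _)

lemma orb_eq_orb (h : σ.SameCycle x y) : orb σ x = orb σ y := by
  ext z; simp only [mem_orb]
  exact ⟨fun hz => h.symm.trans hz, fun hz => h.trans hz⟩

lemma sameCycle_of_orb_eq (h : orb σ x = orb σ y) : σ.SameCycle x y := by
  have := self_mem_orb (σ := σ) (x := y)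
  rw [← h, mem_orb] at this; exact this

/-- Number of orbits (cycles + fixed points) of a permutation. -/
def cnt (σ : Perm α) : ℕ := (Finset.univ.image (orb σ)).card

lemma orb_mem_orbs : orb σ x ∈ Finset.univ.image (orb σ) :=
  Finset.mem_image_of_mem _ (Finset.mem_univ x)

lemma cnt_one : cnt (1 : Perm α) = Fintype.card α := by
  have h : ∀ x : α, orb (1 : Perm α) x = {x} := by
    intro x; ext z; simp [mem_orb, sameCycle_one, eq_comm]
  rw [cnt]
  rw [Finset.card_image_of_injective _ (fun x y hxy => by
    have := self_mem_orb (σ := (1:Perm α)) (x := y)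
    rw [← hxy, h x, Finset.mem_singleton] at this
    exact this.symm ▸ rfl)]
  · simp

-- orbit structure after a merge
lemma orb_swap_mul_of_not (h : ¬ σ.SameCycle a b) (hxa : ¬ σ.SameCycle x a)
    (hxb : ¬ σ.SameCycle x b) : orb (Equiv.swap a b * σ) x = orb σ x := by
  ext z
  simp only [mem_orb, sameCycle_swap_mul_iff h]
  constructor
  · rintro (hz | ⟨hz, -⟩ | ⟨hz, -⟩)
    · exact hz
    · exact absurd hz hxa
    · exact absurd hz hxb
  · exact Or.inl

lemma orb_swap_mul_of_mem (h : ¬ σ.SameCycle a b)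
    (hx : σ.SameCycle x a ∨ σ.SameCycle x b) :
    orb (Equiv.swap a b * σ) x = orb σ a ∪ orb σ b := by
  ext z
  simp only [mem_orb, Finset.mem_union, sameCycle_swap_mul_iff h]
  rcases hx with hx | hx
  · constructor
    · rintro (hz | ⟨-, hz⟩ | ⟨hxb, -⟩)
      · exact Or.inl (hx.symm.trans hz)
      · exact Or.inr hz.symm
      · exact absurd (hx.symm.trans hxb) h
    · rintro (hz | hz)
      · exact Or.inl (hx.trans hz)
      · exact Or.inr (Or.inl ⟨hx, hz.symm⟩)
  · constructor
    · rintro (hz | ⟨hxa, -⟩ | ⟨-, hz⟩)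
      · exact Or.inr (hx.symm.trans hz)
      · exact absurd (hxa.symm.trans hx) h
      · exact Or.inl hz.symm
    · rintro (hz | hz)
      · exact Or.inr (Or.inr ⟨hx, hz.symm⟩)
      · exact Or.inl (hx.trans hz)

lemma cnt_swap_mul (h : ¬ σ.SameCycle a b) :
    cnt σ = cnt (Equiv.swap a b * σ) + 1 := by
  classical
  have hAB : orb σ a ≠ orb σ b := fun hab => h (sameCycle_of_orb_eq hab)
  have horbs : Finset.univ.image (orb (Equiv.swap a b * σ)) =
      insert (orb σ a ∪ orb σ b)
        (((Finset.univ.image (orb σ)).erase (orb σ a)).erase (orb σ b)) := by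
    ext S
    simp only [Finset.mem_image, Finset.mem_insert, Finset.mem_erase, Finset.mem_univ,
      true_and]
    constructor
    · rintro ⟨x, rfl⟩
      by_cases hx : σ.SameCycle x a ∨ σ.SameCycle x b
      · exact Or.inl (orb_swap_mul_of_mem h hx)
      · push_neg at hx
        rw [orb_swap_mul_of_not h hx.1 hx.2]
        refine Or.inr ⟨?_, ?_, x, rfl⟩
        · exact fun he => hx.2 (sameCycle_of_orb_eq he)
        · exact fun he => hx.1 (sameCycle_of_orb_eq he)
    · rintro (hS | ⟨hb', ha', x, hx⟩)
      · exact ⟨a, (orb_swap_mul_of_mem h (Or.inl (SameCycle.refl _ _))).trans hS.symm⟩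
      · refine ⟨x, Eq.trans (orb_swap_mul_of_not h ?_ ?_) hx⟩
        · exact fun he => ha' (hx ▸ orb_eq_orb he)
        · exact fun he => hb' (hx ▸ orb_eq_orb he)
  have hnotmem : (orb σ a ∪ orb σ b) ∉
      ((Finset.univ.image (orb σ)).erase (orb σ a)).erase (orb σ b) := by
    intro hmem
    rw [Finset.mem_erase, Finset.mem_erase] at hmem
    obtain ⟨x, -, hx⟩ := Finset.mem_image.1 hmem.2.2
    have ha : a ∈ orb σ x := by rw [hx]; exact Finset.mem_union_left _ self_mem_orb
    have hb : b ∈ orb σ x := by rw [hx]; exact Finset.mem_union_right _ self_mem_orb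
    exact h ((mem_orb.1 ha).symm.trans (mem_orb.1 hb))
  have hbmem : orb σ b ∈ (Finset.univ.image (orb σ)).erase (orb σ a) :=
    Finset.mem_erase.2 ⟨fun he => hAB he.symm, orb_mem_orbs⟩
  rw [cnt, cnt, horbs, Finset.card_insert_of_notMem hnotmem,
    Finset.card_erase_of_mem hbmem, Finset.card_erase_of_mem orb_mem_orbs]
  have h2 : 2 ≤ (Finset.univ.image (orb σ)).card := by
    have : ({orb σ a, orb σ b} : Finset (Finset α)) ⊆ Finset.univ.image (orb σ) := by
      intro S hS
      rcases Finset.mem_insert.1 hS with rfl | hS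
      · exact orb_mem_orbs
      · rw [Finset.mem_singleton.1 hS]; exact orb_mem_orbs
    calc 2 = ({orb σ a, orb σ b} : Finset (Finset α)).card := by
            rw [Finset.card_insert_of_notMem (by simpa using hAB), Finset.card_singleton]
         _ ≤ _ := Finset.card_le_card this
  omega

lemma cnt_swap_mul_ge (hab : a ≠ b) (h : σ.SameCycle a b) :
    cnt σ ≤ cnt (Equiv.swap a b * σ) := by
  by_cases h' : (Equiv.swap a b * σ).SameCycle a b
  · -- relations coincide
    have he : ∀ x, orb σ x = orb (Equiv.swap a b * σ) x := by
      intro x; ext z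
      simp only [mem_orb]
      constructor
      · exact fun hz => sameCycle_mono h' hz
      · intro hz
        have hσ : σ = Equiv.swap a b * (Equiv.swap a b * σ) := by
          rw [← mul_assoc, Equiv.swap_mul_self, one_mul]
        have : (Equiv.swap a b * (Equiv.swap a b * σ)).SameCycle x z :=
          sameCycle_mono (by rw [← hσ]; exact h) hz
        rwa [← hσ] at this
    unfold cnt
    rw [funext he]
  · have := cnt_swap_mul (σ := Equiv.swap a b * σ) h'
    rw [← mul_assoc, Equiv.swap_mul_self, one_mul] at this
    omega

/-- A list of transpositions is *good* if each one merges two distinct orbits of the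
product of the later ones. -/
def good : List (Perm α) → Prop
  | [] => True
  | t :: L => good L ∧ ∃ a b : α, t = Equiv.swap a b ∧ ¬ (L.prod).SameCycle a b

lemma cnt_prod_add_length_of_good {L : List (Perm α)} (h : good L) :
    cnt L.prod + L.length = Fintype.card α := by
  induction L with
  | nil => simpa using cnt_one
  | cons t L ih =>
    obtain ⟨hL, a, b, rfl, hab⟩ := h
    have := cnt_swap_mul hab
    have := ih hL
    rw [List.prod_cons, List.length_cons]
    omega

lemma le_cnt_prod_add_length {L : List (Perm α)} (h : ∀ τ ∈ L, τ.IsSwap) :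
    Fintype.card α ≤ cnt L.prod + L.length := by
  induction L with
  | nil => simp [cnt_one]
  | cons t L ih =>
    obtain ⟨a, b, hab, rfl⟩ := h t List.mem_cons_self
    have hL := ih (fun τ hτ => h τ (List.mem_cons_of_mem _ hτ))
    rw [List.prod_cons, List.length_cons]
    by_cases hs : (L.prod).SameCycle a b
    · have := cnt_swap_mul_ge hab hs
      omega
    · have := cnt_swap_mul hs
      omega

lemma good_of_cnt {L : List (Perm α)} (h : ∀ τ ∈ L, τ.IsSwap)
    (he : cnt L.prod + L.length = Fintype.card α) : good L := by
  induction L with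
  | nil => trivial
  | cons t L ih =>
    obtain ⟨a, b, hab, rfl⟩ := h t List.mem_cons_self
    have hL := le_cnt_prod_add_length (fun τ hτ => h τ (List.mem_cons_of_mem _ hτ))
    rw [List.prod_cons, List.length_cons] at he
    by_cases hs : (L.prod).SameCycle a b
    · have := cnt_swap_mul_ge hab hs
      omega
    · have hcm := cnt_swap_mul (σ := L.prod) hs
      refine ⟨ih (fun τ hτ => h τ (List.mem_cons_of_mem _ hτ)) (by omega), a, b, rfl, hs⟩

lemma pow_fix {k : ℕ} (h : σ x = x) : (σ ^ k) x = x := by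
  induction k with
  | zero => rfl
  | succ k ih => rw [pow_succ_apply, ih, h]

lemma all_sameCycle_of_cnt_eq_one (h : cnt σ = 1) (x y : α) : σ.SameCycle x y := by
  obtain ⟨S, hS⟩ := Finset.card_eq_one.1 h
  have hx : orb σ x = S := by
    have := orb_mem_orbs (σ := σ) (x := x); rwa [hS, Finset.mem_singleton] at this
  have hy : orb σ y = S := by
    have := orb_mem_orbs (σ := σ) (x := y); rwa [hS, Finset.mem_singleton] at this
  exact sameCycle_of_orb_eq (hx.trans hy.symm)

lemma cnt_eq_one_of_all [Nonempty α] (h : ∀ x y : α, σ.SameCycle x y) : cnt σ = 1 := by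
  have horb : ∀ x : α, orb σ x = Finset.univ := by
    intro x; ext z; simp [mem_orb, h]
  rw [cnt]
  have : Finset.univ.image (orb σ) = {Finset.univ (α := α)} := by
    ext S
    simp only [Finset.mem_image, Finset.mem_univ, true_and, Finset.mem_singleton]
    constructor
    · rintro ⟨x, rfl⟩; exact horb x
    · intro hS; exact ⟨Classical.arbitrary α, (horb _).trans hS.symm⟩
  rw [this, Finset.card_singleton]

lemma all_sameCycle_of_full (hc : σ.IsCycle) (hs : σ.support = Finset.univ)
    (x y : α) : σ.SameCycle x y := by
  obtain ⟨x₀, hx₀, hrest⟩ := hc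
  have hmove : ∀ z : α, σ z ≠ z := by
    intro z
    have : z ∈ σ.support := hs ▸ Finset.mem_univ z
    exact Equiv.Perm.mem_support.1 this
  exact ((hrest (hmove x)).symm.trans (hrest (hmove y)))

lemma full_of_cnt_eq_one (h2 : 2 ≤ Fintype.card α) (h : cnt σ = 1) :
    σ.IsCycle ∧ σ.support = Finset.univ := by
  have all := all_sameCycle_of_cnt_eq_one h
  have hne : σ ≠ 1 := by
    rintro rfl
    obtain ⟨x, y, hxy⟩ := (Fintype.one_lt_card_iff (α := α)).1 (by omega)
    exact hxy (sameCycle_one.1 (all x y))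
  have hex : ¬ ∀ x : α, σ x = x := fun hall => hne (Equiv.ext hall)
  push_neg at hex
  obtain ⟨x₀, hx₀⟩ := hex
  have hmove : ∀ z : α, σ z ≠ z := by
    intro z hz
    obtain ⟨k, -, hk⟩ := (all z x₀).exists_pow_eq'
    rw [pow_fix hz] at hk
    exact hx₀ (hk ▸ hz)
  refine ⟨⟨x₀, hx₀, fun y _ => all x₀ y⟩, ?_⟩
  ext z
  simp [Equiv.Perm.mem_support, hmove z]

/-- Directed edge to transposition. -/
def toSwap (e : α × α) : Perm α := Equiv.swap e.1 e.2

/-- Product of the swaps of a directed-edge list. -/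
def sprod (P : List (α × α)) : Perm α := (P.map toSwap).prod

/-- Targets of a directed-edge list. -/
def tgts (P : List (α × α)) : List α := P.map Prod.snd

lemma sprod_nil : sprod ([] : List (α × α)) = 1 := rfl

lemma sprod_cons {e : α × α} {P : List (α × α)} :
    sprod (e :: P) = Equiv.swap e.1 e.2 * sprod P := by
  simp [sprod, toSwap]

/-- Validity of a Pitman growth sequence. -/
def valid : List (α × α) → Prop
  | [] => True
  | e :: P => valid P ∧ e.2 ∉ tgts P ∧ ¬ (sprod P).SameCycle e.1 e.2

lemma valid_good {P : List (α × α)} (h : valid P) : good (P.map toSwap) := by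
  induction P with
  | nil => trivial
  | cons e P ih =>
    obtain ⟨hP, -, hsc⟩ := h
    exact ⟨ih hP, e.1, e.2, rfl, hsc⟩

lemma nodup_tgts {P : List (α × α)} (h : valid P) : (tgts P).Nodup := by
  induction P with
  | nil => exact List.nodup_nil
  | cons e P ih =>
    obtain ⟨hP, hr, -⟩ := h
    exact List.nodup_cons.2 ⟨hr, ih hP⟩

lemma length_tgts {P : List (α × α)} : (tgts P).length = P.length := List.length_map _

/-- Key invariant: every orbit of the partial product contains exactly one non-target. -/
lemma exists_unique_free {P : List (α × α)} (h : valid P) (x : α) :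
    ∃! y : α, (sprod P).SameCycle x y ∧ y ∉ tgts P := by
  induction P generalizing x with
  | nil =>
    refine ⟨x, ⟨SameCycle.refl _ _, List.not_mem_nil⟩, fun y hy => ?_⟩
    have : (1 : Perm α).SameCycle x y := hy.1
    exact (sameCycle_one.1 this).symm
  | cons e P ih =>
    obtain ⟨hP, hr, hur⟩ := h
    have htc : tgts (e :: P) = e.2 :: tgts P := rfl
    obtain ⟨yr, ⟨hyr1, hyr2⟩, hyru⟩ := ih hP e.2
    have hrr : yr = e.2 := (hyru e.2 ⟨SameCycle.refl _ _, hr⟩).symm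
    have freeR : ∀ y, (sprod P).SameCycle e.2 y → y ∉ tgts P → y = e.2 :=
      fun y h1 h2 => (hyru y ⟨h1, h2⟩).trans hrr
    rw [sprod_cons, htc]
    by_cases h1 : (sprod P).SameCycle x e.1
    · have h2 : ¬ (sprod P).SameCycle x e.2 := fun h2 => hur (h1.symm.trans h2)
      obtain ⟨yu, ⟨hyu1, hyu2⟩, huu⟩ := ih hP e.1
      refine ⟨yu, ⟨?_, ?_⟩, ?_⟩
      · exact (sameCycle_swap_mul_iff hur).2 (Or.inl (h1.trans hyu1))
      · simp only [List.mem_cons, not_or]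
        exact ⟨fun he => hur (he ▸ hyu1), hyu2⟩
      · rintro y' ⟨hsc, hnm⟩
        simp only [List.mem_cons, not_or] at hnm
        rcases (sameCycle_swap_mul_iff hur).1 hsc with hxy | ⟨hxa, hyb⟩ | ⟨hxb, hya⟩
        · exact huu y' ⟨h1.symm.trans hxy, hnm.2⟩
        · exact absurd (freeR y' hyb.symm hnm.2) hnm.1
        · exact absurd hxb h2
    · by_cases h2 : (sprod P).SameCycle x e.2
      · obtain ⟨yu, ⟨hyu1, hyu2⟩, huu⟩ := ih hP e.1
        refine ⟨yu, ⟨?_, ?_⟩, ?_⟩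
        · exact (sameCycle_swap_mul_iff hur).2 (Or.inr (Or.inr ⟨h2, hyu1.symm⟩))
        · simp only [List.mem_cons, not_or]
          refine ⟨fun he => hur (he ▸ hyu1), hyu2⟩
        · rintro y' ⟨hsc, hnm⟩
          simp only [List.mem_cons, not_or] at hnm
          rcases (sameCycle_swap_mul_iff hur).1 hsc with hxy | ⟨hxa, hyb⟩ | ⟨hxb, hya⟩
          · exact absurd (freeR y' (h2.symm.trans hxy) hnm.2) hnm.1
          · exact absurd hxa h1
          · exact huu y' ⟨hya.symm, hnm.2⟩
      · obtain ⟨y, ⟨hy1, hy2⟩, huy⟩ := ih hP x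
        refine ⟨y, ⟨?_, ?_⟩, ?_⟩
        · exact (sameCycle_swap_mul_iff hur).2 (Or.inl hy1)
        · simp only [List.mem_cons, not_or]
          exact ⟨fun he => h2 (he ▸ hy1), hy2⟩
        · rintro y' ⟨hsc, hnm⟩
          simp only [List.mem_cons, not_or] at hnm
          rcases (sameCycle_swap_mul_iff hur).1 hsc with hxy | ⟨hxa, hyb⟩ | ⟨hxb, hya⟩
          · exact huy y' ⟨hxy, hnm.2⟩
          · exact absurd hxa h1
          · exact absurd hxb h2

/-- The free (non-target) elements. -/
def freeSet (P : List (α × α)) : Finset α := Finset.univ \ (tgts P).toFinset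

lemma card_freeSet {P : List (α × α)} (h : valid P) :
    (freeSet P).card = Fintype.card α - P.length := by
  rw [freeSet, Finset.card_sdiff_of_subset (Finset.subset_univ _), Finset.card_univ,
    List.toFinset_card_of_nodup (nodup_tgts h), length_tgts]

lemma card_free_inter_orb {P : List (α × α)} (h : valid P) (u : α) :
    ((freeSet P).filter ((sprod P).SameCycle u)).card = 1 := by
  obtain ⟨y, ⟨hy1, hy2⟩, huy⟩ := exists_unique_free h u
  rw [Finset.card_eq_one]
  refine ⟨y, ?_⟩
  ext z
  simp only [Finset.mem_filter, freeSet, Finset.mem_sdiff, Finset.mem_univ, true_and,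
    List.mem_toFinset, Finset.mem_singleton]
  constructor
  · rintro ⟨hz1, hz2⟩
    exact huy z ⟨hz2, hz1⟩
  · rintro rfl
    exact ⟨hy2, hy1⟩

lemma ext_card {P : List (α × α)} (h : valid P) :
    (Finset.univ.filter (fun e : α × α =>
        e.2 ∉ tgts P ∧ ¬ (sprod P).SameCycle e.1 e.2)).card
      = Fintype.card α * (Fintype.card α - P.length - 1) := by
  classical
  have hrow : ∀ u : α, (Finset.univ.filter (fun r : α =>
      r ∉ tgts P ∧ ¬ (sprod P).SameCycle u r)).card
        = Fintype.card α - P.length - 1 := by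
    intro u
    have hsub : Finset.univ.filter (fun r : α => r ∉ tgts P ∧ ¬ (sprod P).SameCycle u r)
        = freeSet P \ ((freeSet P).filter ((sprod P).SameCycle u)) := by
      ext r
      simp only [Finset.mem_filter, Finset.mem_univ, true_and, Finset.mem_sdiff, freeSet,
        List.mem_toFinset, not_and]
      tauto
    rw [hsub, Finset.card_sdiff_of_subset (Finset.filter_subset _ _), card_freeSet h,
      card_free_inter_orb h u]
  have hfib := Finset.card_eq_sum_card_fiberwise
    (f := (Prod.fst : α × α → α))
    (s := Finset.univ.filter (fun e : α × α =>
        e.2 ∉ tgts P ∧ ¬ (sprod P).SameCycle e.1 e.2))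
    (t := Finset.univ) (fun x _ => Finset.mem_univ _)
  rw [hfib]
  have hfe : ∀ u : α, ((Finset.univ.filter (fun e : α × α =>
      e.2 ∉ tgts P ∧ ¬ (sprod P).SameCycle e.1 e.2)).filter (fun e => e.1 = u)).card
        = Fintype.card α - P.length - 1 := by
    intro u
    rw [← hrow u]
    apply Finset.card_bij (fun e _ => e.2)
    · rintro e he
      simp only [Finset.mem_filter, Finset.mem_univ, true_and] at he ⊢
      obtain ⟨⟨h1, h2⟩, h3⟩ := he
      exact ⟨h1, h3 ▸ h2⟩
    · rintro e he e' he' hee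
      simp only [Finset.mem_filter, Finset.mem_univ, true_and] at he he'
      exact Prod.ext (he.2.trans he'.2.symm) hee
    · intro r hr
      simp only [Finset.mem_filter, Finset.mem_univ, true_and] at hr
      exact ⟨(u, r), by simp [hr.1, hr.2], rfl⟩
  calc ∑ u : α, ((Finset.univ.filter (fun e : α × α =>
      e.2 ∉ tgts P ∧ ¬ (sprod P).SameCycle e.1 e.2)).filter (fun e => e.1 = u)).card
      = ∑ _u : α, (Fintype.card α - P.length - 1) := by
        exact Finset.sum_congr rfl (fun u _ => hfe u)
    _ = Fintype.card α * (Fintype.card α - P.length - 1) := by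
        rw [Finset.sum_const, Finset.card_univ, smul_eq_mul]

variable (α) in
/-- Valid Pitman sequences of length `m`. -/
def Vset (m : ℕ) : Type _ := {P : List (α × α) // valid P ∧ P.length = m}

lemma finite_listSubtype {γ : Type*} [Finite γ] (m : ℕ) (p : List γ → Prop) :
    Finite {L : List γ // p L ∧ L.length = m} := by
  apply Finite.of_injective
    (f := fun L : {L : List γ // p L ∧ L.length = m} =>
      (fun i : Fin m => L.1.get (Fin.cast L.2.2.symm i)))
  intro L M hLM
  apply Subtype.ext
  apply List.ext_get (by rw [L.2.2, M.2.2])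
  intro i h1 h2
  have := congrFun hLM ⟨i, by rw [← L.2.2] at *; exact h1⟩
  simpa using this

instance (m : ℕ) : Finite (Vset α m) := finite_listSubtype m valid

/-- Extension step. -/
def consFun (m : ℕ) (x : Σ P : Vset α m,
    {e : α × α // e.2 ∉ tgts P.1 ∧ ¬ (sprod P.1).SameCycle e.1 e.2}) : Vset α (m+1) :=
  ⟨x.2.1 :: x.1.1, ⟨x.1.2.1, x.2.2.1, x.2.2.2⟩, by simp [x.1.2.2]⟩

lemma consFun_bij (m : ℕ) : Function.Bijective (consFun (α := α) m) := by
  constructor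
  · rintro ⟨⟨P, hP⟩, e, he⟩ ⟨⟨P', hP'⟩, e', he'⟩ h
    have h' : e :: P = e' :: P' := congrArg Subtype.val h
    obtain ⟨rfl, rfl⟩ := List.cons_eq_cons.mp h'
    rfl
  · rintro ⟨L, hv, hlen⟩
    match L, hv, hlen with
    | e :: P, hv, hlen =>
      exact ⟨⟨⟨P, hv.1, Nat.succ_injective hlen⟩, ⟨e, hv.2.1, hv.2.2⟩⟩, rfl⟩

lemma card_Vset_zero : Nat.card (Vset α 0) = 1 := by
  rw [Nat.card_eq_one_iff_unique]
  constructor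
  · constructor
    rintro ⟨L, -, hL⟩ ⟨M, -, hM⟩
    apply Subtype.ext
    rw [List.length_eq_zero_iff] at hL hM
    exact hL.trans hM.symm
  · exact ⟨⟨[], trivial, rfl⟩⟩

lemma card_Vset_succ (m : ℕ) :
    Nat.card (Vset α (m+1))
      = (Fintype.card α * (Fintype.card α - m - 1)) * Nat.card (Vset α m) := by
  classical
  letI : Fintype (Vset α m) := Fintype.ofFinite _
  rw [Nat.card_congr (Equiv.ofBijective _ (consFun_bij (α := α) m)).symm]
  rw [Nat.card_eq_fintype_card, Fintype.card_sigma]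
  have hfib : ∀ P : Vset α m,
      Fintype.card {e : α × α // e.2 ∉ tgts P.1 ∧ ¬ (sprod P.1).SameCycle e.1 e.2}
        = Fintype.card α * (Fintype.card α - m - 1) := by
    intro P
    rw [Fintype.card_subtype]
    have := ext_card (P := P.1) P.2.1
    rw [P.2.2] at this
    exact this
  rw [Finset.sum_congr rfl (fun P _ => hfib P), Finset.sum_const, Finset.card_univ,
    smul_eq_mul, Nat.card_eq_fintype_card, mul_comm]

lemma card_Vset (m : ℕ) :
    Nat.card (Vset α m)
      = ∏ j ∈ Finset.range m, (Fintype.card α * (Fintype.card α - j - 1)) := by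
  induction m with
  | zero => simpa using card_Vset_zero
  | succ m ih =>
    rw [card_Vset_succ, ih, Finset.prod_range_succ, mul_comm]

lemma card_Vset_top (n : ℕ) (hn : Fintype.card α = n) (h2 : 2 ≤ n) :
    Nat.card (Vset α (n-1)) = n ^ (n-1) * (n-1).factorial := by
  rw [card_Vset, hn]
  rw [Finset.prod_mul_distrib, Finset.prod_const, Finset.card_range]
  congr 1
  have : ∀ j ∈ Finset.range (n-1), n - j - 1 = ((n-1) - 1 - j) + 1 := by
    intro j hj
    rw [Finset.mem_range] at hj
    omega
  rw [Finset.prod_congr rfl this, Finset.prod_range_reflect (fun j => j + 1) (n-1),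
    Finset.prod_range_add_one_eq_factorial]

lemma mem_freeSet {P : List (α × α)} {z : α} : z ∈ freeSet P ↔ z ∉ tgts P := by
  simp [freeSet]

lemma freeSet_cons {e : α × α} {P : List (α × α)} :
    freeSet (e :: P) = (freeSet P).erase e.2 := by
  ext z
  have : tgts (e :: P) = e.2 :: tgts P := rfl
  simp [freeSet, this, Finset.mem_erase, and_comm, not_or, and_assoc]

lemma freeSet_trans {P : List (α × α)} (h : valid P) (x : α) :
    ∃! y, y ∈ freeSet P ∧ (sprod P).SameCycle x y := by
  obtain ⟨y, ⟨hy1, hy2⟩, huy⟩ := exists_unique_free h x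
  exact ⟨y, ⟨mem_freeSet.2 hy2, hy1⟩, fun y' hy' => huy y' ⟨hy'.2, mem_freeSet.1 hy'.1⟩⟩

lemma swap_eq_swap_cases {a b c d : α} (hab : a ≠ b)
    (h : Equiv.swap a b = Equiv.swap c d) : (c = a ∧ d = b) ∨ (c = b ∧ d = a) := by
  have hcd : c ≠ d := by
    rintro rfl
    rw [Equiv.swap_self] at h
    have := congrArg (fun g : Perm α => g a) h
    simp at this
    exact hab this.symm
  have h1 : Equiv.swap a b c = d := by rw [h, Equiv.swap_apply_left]
  by_cases hc1 : c = a
  · subst hc1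
    rw [Equiv.swap_apply_left] at h1
    exact Or.inl ⟨rfl, h1.symm⟩
  by_cases hc2 : c = b
  · subst hc2
    rw [Equiv.swap_apply_right] at h1
    exact Or.inr ⟨rfl, h1.symm⟩
  · rw [Equiv.swap_apply_of_ne_of_ne hc1 hc2] at h1
    exact absurd h1 hcd

lemma psi_inj {P : List (α × α)} :
    ∀ {Q : List (α × α)}, valid P → valid Q → P.map toSwap = Q.map toSwap →
      freeSet P = freeSet Q → P = Q := by
  induction P with
  | nil =>
    intro Q _ _ hm _
    exact (List.map_eq_nil_iff.1 hm.symm).symm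
  | cons e P' ih =>
    rintro (_ | ⟨f, Q'⟩) hP hQ hm hψ
    · exact absurd hm (by simp)
    obtain ⟨hP', hPr, hPs⟩ := hP
    obtain ⟨hQ', hQr, hQs⟩ := hQ
    rw [List.map_cons, List.map_cons, List.cons_eq_cons] at hm
    obtain ⟨hhead, htail⟩ := hm
    have hne : e.1 ≠ e.2 := fun h => hPs (h ▸ SameCycle.refl _ _)
    have hsprod : sprod P' = sprod Q' := by rw [sprod, htail]; rfl
    rcases swap_eq_swap_cases hne hhead with ⟨h1, h2⟩ | ⟨h1, h2⟩
    · -- same orientation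
      have hPQ' : P' = Q' := by
        apply ih hP' hQ' htail
        have hrP : e.2 ∈ freeSet P' := mem_freeSet.2 hPr
        have hrQ : f.2 ∈ freeSet Q' := mem_freeSet.2 hQr
        rw [h2] at hrQ
        have := hψ
        rw [freeSet_cons, freeSet_cons, h2] at this
        ext z
        by_cases hz : z = e.2
        · subst hz; simp [hrP, hrQ]
        · have := Finset.ext_iff.1 this z
          simp only [Finset.mem_erase, hz, ne_eq, not_false_iff, true_and] at this
          exact this
      refine ?_
      have : e = f := Prod.ext h1.symm h2.symm
      rw [this, hPQ']
    · -- reversed orientation: contradiction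
      exfalso
      have hu : e.1 ∈ freeSet Q' := by
        have := mem_freeSet.2 hQr
        rwa [h2] at this
      have hψ' : (freeSet P').erase e.2 = (freeSet Q').erase e.1 := by
        have := hψ
        rwa [freeSet_cons, freeSet_cons, h2] at this
      by_cases huP : e.1 ∈ freeSet P'
      · have : e.1 ∈ (freeSet P').erase e.2 := Finset.mem_erase.2 ⟨hne, huP⟩
        rw [hψ'] at this
        exact (Finset.mem_erase.1 this).1 rfl
      · obtain ⟨yA, ⟨hyA1, hyA2⟩, hyAu⟩ := freeSet_trans hP' e.1
        have hyAne : yA ≠ e.1 := fun h => huP (h ▸ hyA1)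
        have hyAr : yA ≠ e.2 := by
          rintro rfl
          exact hPs hyA2.symm.symm
        have hyAQ : yA ∈ freeSet Q' := by
          have : yA ∈ (freeSet P').erase e.2 := Finset.mem_erase.2 ⟨hyAr, hyA1⟩
          rw [hψ'] at this
          exact (Finset.mem_erase.1 this).2
        -- both e.1 and yA are free in Q' and in the same σ'-orbit of e.1
        obtain ⟨w, -, hw⟩ := freeSet_trans hQ' e.1
        have h1' := hw e.1 ⟨hu, SameCycle.refl _ _⟩
        have h2' := hw yA ⟨hyAQ, by rw [← hsprod]; exact hyA2⟩
        exact hyAne (h2'.trans h1'.symm)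

lemma trans_step {σ' : Perm α} {a b : α} (hab : ¬ σ'.SameCycle a b) {F : Finset α}
    (hF : ∀ x, ∃! y, y ∈ F ∧ (Equiv.swap a b * σ').SameCycle x y)
    {f : α} (hfF : f ∈ F) (hfa : σ'.SameCycle f a) :
    b ∉ F ∧ ∀ x, ∃! y, y ∈ insert b F ∧ σ'.SameCycle x y := by
  have hbF : b ∉ F := by
    intro hb
    have hfc : (Equiv.swap a b * σ').SameCycle a f :=
      (sameCycle_swap_mul_iff hab).2 (Or.inl hfa.symm)
    have hbc : (Equiv.swap a b * σ').SameCycle a b :=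
      (sameCycle_swap_mul_iff hab).2 (Or.inr (Or.inl ⟨SameCycle.refl _ _, SameCycle.refl _ _⟩))
    have := ((hF a).unique ⟨hfF, hfc⟩ ⟨hb, hbc⟩)
    rw [this] at hfa
    exact hab hfa.symm
  refine ⟨hbF, fun x => ?_⟩
  by_cases hx1 : σ'.SameCycle x a
  · refine ⟨f, ⟨Finset.mem_insert_of_mem hfF, hx1.trans hfa.symm⟩, ?_⟩
    rintro y' ⟨hy'm, hy'r⟩
    rcases Finset.mem_insert.1 hy'm with rfl | hy'F
    · exact absurd (hx1.symm.trans hy'r) hab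
    · exact (hF x).unique ⟨hy'F, (sameCycle_swap_mul_iff hab).2 (Or.inl hy'r)⟩
        ⟨hfF, (sameCycle_swap_mul_iff hab).2 (Or.inl (hx1.trans hfa.symm))⟩
  · by_cases hx2 : σ'.SameCycle x b
    · refine ⟨b, ⟨Finset.mem_insert_self _ _, hx2⟩, ?_⟩
      rintro y' ⟨hy'm, hy'r⟩
      rcases Finset.mem_insert.1 hy'm with rfl | hy'F
      · rfl
      · exfalso
        have := (hF x).unique ⟨hy'F, (sameCycle_swap_mul_iff hab).2 (Or.inl hy'r)⟩
          ⟨hfF, (sameCycle_swap_mul_iff hab).2 (Or.inr (Or.inr ⟨hx2, hfa⟩))⟩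
        rw [this] at hy'r
        exact hab (hfa.symm.trans (hy'r.symm.trans hx2))
    · obtain ⟨y₀, ⟨hy₀m, hy₀r⟩, hy₀u⟩ := hF x
      have hy₀' : σ'.SameCycle x y₀ := by
        rcases (sameCycle_swap_mul_iff hab).1 hy₀r with h | ⟨h, -⟩ | ⟨h, -⟩
        · exact h
        · exact absurd h hx1
        · exact absurd h hx2
      refine ⟨y₀, ⟨Finset.mem_insert_of_mem hy₀m, hy₀'⟩, ?_⟩
      rintro y' ⟨hy'm, hy'r⟩
      rcases Finset.mem_insert.1 hy'm with rfl | hy'F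
      · exact absurd hy'r hx2
      · exact hy₀u y' ⟨hy'F, (sameCycle_swap_mul_iff hab).2 (Or.inl hy'r)⟩

lemma psi_surj {L : List (Perm α)} (hL : good L) :
    ∀ F : Finset α, (∀ x, ∃! y, y ∈ F ∧ (L.prod).SameCycle x y) →
      ∃ P, valid P ∧ P.map toSwap = L ∧ freeSet P = F := by
  induction L with
  | nil =>
    intro F hF
    refine ⟨[], trivial, rfl, ?_⟩
    have : F = Finset.univ := by
      ext x
      simp only [Finset.mem_univ, iff_true]
      obtain ⟨y, ⟨hym, hyr⟩, -⟩ := hF x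
      rw [List.prod_nil] at hyr
      rw [← sameCycle_one.1 hyr] at hym
      exact hym
    rw [this]
    simp [freeSet, tgts]
  | cons t L' ih =>
    intro F hF
    obtain ⟨hL', a, b, rfl, hab⟩ := hL
    rw [List.prod_cons] at hF
    obtain ⟨f, ⟨hfF, hfr⟩, -⟩ := hF a
    have hfd : (L'.prod).SameCycle f a ∨ (L'.prod).SameCycle f b := by
      rcases (sameCycle_swap_mul_iff hab).1 hfr with h | ⟨-, h⟩ | ⟨h, -⟩
      · exact Or.inl h.symm
      · exact Or.inr h
      · exact absurd h hab
    rcases hfd with hfa | hfb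
    · obtain ⟨hbF, htr⟩ := trans_step hab hF hfF hfa
      obtain ⟨P', hP'v, hP'm, hP'ψ⟩ := ih hL' (insert b F) htr
      have hsp : sprod P' = L'.prod := by rw [sprod, hP'm]
      refine ⟨(a, b) :: P', ⟨hP'v, ?_, ?_⟩, ?_, ?_⟩
      · exact mem_freeSet.1 (by rw [hP'ψ]; exact Finset.mem_insert_self _ _)
      · rw [hsp]; exact hab
      · rw [List.map_cons, hP'm]; rfl
      · rw [freeSet_cons, hP'ψ]
        exact Finset.erase_insert hbF
    · have hab2 : ¬ (L'.prod).SameCycle b a := fun h => hab h.symm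
      have hF2 : ∀ x, ∃! y, y ∈ F ∧ (Equiv.swap b a * L'.prod).SameCycle x y := by
        rw [Equiv.swap_comm]; exact hF
      obtain ⟨hbF, htr⟩ := trans_step hab2 hF2 hfF hfb
      obtain ⟨P', hP'v, hP'm, hP'ψ⟩ := ih hL' (insert a F) htr
      have hsp : sprod P' = L'.prod := by rw [sprod, hP'm]
      refine ⟨(b, a) :: P', ⟨hP'v, ?_, ?_⟩, ?_, ?_⟩
      · exact mem_freeSet.1 (by rw [hP'ψ]; exact Finset.mem_insert_self _ _)
      · rw [hsp]; exact hab2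
      · rw [List.map_cons, hP'm]
        show Equiv.swap b a :: L' = Equiv.swap a b :: L'
        rw [Equiv.swap_comm]
      · rw [freeSet_cons, hP'ψ]
        exact Finset.erase_insert hbF

lemma valid_ne {P : List (α × α)} (h : valid P) : ∀ e ∈ P, e.1 ≠ e.2 := by
  induction P with
  | nil => intro e he; exact absurd he List.not_mem_nil
  | cons f P ih =>
    intro e he
    rcases List.mem_cons.1 he with rfl | he
    · exact fun hee => h.2.2 (hee ▸ SameCycle.refl _ _)
    · exact ih h.1 e he

lemma card_fiber [Nonempty α] {L : List (Perm α)} (hL : good L) (hc : cnt L.prod = 1) :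
    Nat.card {P : List (α × α) // valid P ∧ P.map toSwap = L} = Fintype.card α := by
  have all := all_sameCycle_of_cnt_eq_one hc
  have hsing : ∀ ρ : α, ∀ x, ∃! y, y ∈ ({ρ} : Finset α) ∧ (L.prod).SameCycle x y := by
    intro ρ x
    refine ⟨ρ, ⟨Finset.mem_singleton_self ρ, all x ρ⟩, ?_⟩
    rintro y ⟨hy, -⟩
    exact Finset.mem_singleton.1 hy
  have hch := fun ρ : α => Classical.choose_spec (psi_surj hL {ρ} (hsing ρ))
  rw [← Nat.card_eq_fintype_card (α := α)]
  symm
  apply Nat.card_congr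
  refine Equiv.ofBijective
    (fun ρ => ⟨Classical.choose (psi_surj hL {ρ} (hsing ρ)), (hch ρ).1, (hch ρ).2.1⟩) ⟨?_, ?_⟩
  · intro ρ ρ' h
    have h' := congrArg (fun x : {P : List (α × α) // valid P ∧ P.map toSwap = L}
      => freeSet x.1) h
    simp only at h'
    rw [(hch ρ).2.2, (hch ρ').2.2] at h'
    simpa using Finset.singleton_injective h'
  · rintro ⟨P, hPv, hPm⟩
    have hsp : sprod P = L.prod := by rw [sprod, hPm]
    obtain ⟨y, ⟨hym, hyr⟩, -⟩ := freeSet_trans hPv (Classical.arbitrary α)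
    have hFP : freeSet P = {y} := by
      ext z
      simp only [Finset.mem_singleton]
      constructor
      · intro hz
        obtain ⟨w, -, hw⟩ := freeSet_trans hPv y
        have h1 := hw z ⟨hz, by rw [hsp]; exact all y z⟩
        have h2 := hw y ⟨hym, SameCycle.refl _ _⟩
        exact h1.trans h2.symm
      · rintro rfl; exact hym
    refine ⟨y, ?_⟩
    apply Subtype.ext
    show Classical.choose (psi_surj hL {y} (hsing y)) = P
    exact psi_inj (hch y).1 hPv ((hch y).2.1.trans hPm.symm) ((hch y).2.2.trans hFP.symm)

lemma finite_sub {γ : Type*} [Finite γ] {m : ℕ} (q : List γ → Prop)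
    (hq : ∀ L, q L → L.length = m) : Finite {L : List γ // q L} := by
  have : Finite {L : List γ // (fun _ => True) L ∧ L.length = m} :=
    finite_listSubtype m (fun _ => True)
  apply Finite.of_injective
    (f := fun L : {L : List γ // q L} =>
      (⟨L.1, trivial, hq L.1 L.2⟩ : {L : List γ // (fun _ => True) L ∧ L.length = m}))
  intro L M h
  exact Subtype.ext (congrArg
    (fun x : {L : List γ // (fun _ => True) L ∧ L.length = m} => x.val) h)

variable (α) in
/-- Lists of `|α| - 1` transpositions multiplying to a full cycle. -/
def Sfull : Type _ := {L : List (Perm α) //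
  ((∀ τ ∈ L, τ.IsSwap) ∧ cnt L.prod = 1) ∧ L.length = Fintype.card α - 1}

instance : Finite (Sfull α) := finite_sub _ (fun _ h => h.2)

/-- The forgetful map from Pitman sequences to transposition lists. -/
def Phi [Nonempty α] (P : Vset α (Fintype.card α - 1)) : Sfull α := by
  refine ⟨P.1.map toSwap, ⟨?_, ?_⟩, by rw [List.length_map]; exact P.2.2⟩
  · rintro τ hτ
    obtain ⟨e, he, rfl⟩ := List.mem_map.1 hτ
    exact ⟨e.1, e.2, valid_ne P.2.1 e he, rfl⟩
  · have hg := cnt_prod_add_length_of_good (valid_good P.2.1)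
    rw [List.length_map, P.2.2] at hg
    have : 1 ≤ Fintype.card α := Fintype.card_pos
    omega

lemma card_Vset_eq_Sfull [Nonempty α] :
    Nat.card (Vset α (Fintype.card α - 1)) = Nat.card (Sfull α) * Fintype.card α := by
  classical
  rw [Nat.card_congr (Equiv.sigmaFiberEquiv (Phi (α := α))).symm]
  letI : Fintype (Sfull α) := Fintype.ofFinite _
  have hfib : ∀ y : Sfull α,
      Nat.card {x : Vset α (Fintype.card α - 1) // Phi x = y} = Fintype.card α := by
    intro y
    have e : {x : Vset α (Fintype.card α - 1) // Phi x = y}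
        ≃ {P : List (α × α) // valid P ∧ P.map toSwap = y.1} :=
      { toFun := fun x => ⟨x.1.1, x.1.2.1, congrArg Subtype.val x.2⟩
        invFun := fun P => ⟨⟨P.1, P.2.1, by
          have h1 := congrArg List.length P.2.2
          rw [List.length_map] at h1
          rw [h1, y.2.2]⟩, Subtype.ext P.2.2⟩
        left_inv := fun x => Subtype.ext (Subtype.ext rfl)
        right_inv := fun P => Subtype.ext rfl }
    rw [Nat.card_congr e]
    have hgood : good y.1 := good_of_cnt y.2.1.1 (by
      rw [y.2.2, y.2.1.2]
      have : 1 ≤ Fintype.card α := Fintype.card_pos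
      omega)
    exact card_fiber hgood y.2.1.2
  letI : ∀ y : Sfull α, Fintype {x : Vset α (Fintype.card α - 1) // Phi x = y} :=
    fun y => Fintype.ofFinite _
  rw [Nat.card_eq_fintype_card, Fintype.card_sigma]
  calc ∑ y : Sfull α, Fintype.card {x : Vset α (Fintype.card α - 1) // Phi x = y}
      = ∑ _y : Sfull α, Fintype.card α := by
        refine Finset.sum_congr rfl (fun y _ => ?_)
        rw [← Nat.card_eq_fintype_card, hfib y]
    _ = Nat.card (Sfull α) * Fintype.card α := by
        rw [Finset.sum_const, Finset.card_univ, smul_eq_mul, Nat.card_eq_fintype_card]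

lemma all_conj {σ : Perm α} (h : Perm α) (hall : ∀ x y : α, σ.SameCycle x y) (u v : α) :
    (h * σ * h⁻¹).SameCycle u v := by
  obtain ⟨k, -, hk⟩ := (hall (h⁻¹ u) (h⁻¹ v)).exists_pow_eq'
  refine ⟨(k : ℤ), ?_⟩
  rw [zpow_natCast]
  have hp : (h * σ * h⁻¹) ^ k = h * σ ^ k * h⁻¹ := by
    rw [← MulAut.conj_apply, ← map_pow, MulAut.conj_apply]
  rw [hp]
  simp only [Perm.mul_apply]
  rw [hk]
  exact Equiv.apply_symm_apply h v

lemma cnt_conj_one [Nonempty α] {σ : Perm α} (h : Perm α) (hc : cnt σ = 1) :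
    cnt (h * σ * h⁻¹) = 1 :=
  cnt_eq_one_of_all (all_conj h (all_sameCycle_of_cnt_eq_one hc))

/-- Conjugating a list of permutations. -/
def conjL (g : Perm α) (L : List (Perm α)) : List (Perm α) := L.map (fun τ => g * τ * g⁻¹)

omit [DecidableEq α] [Fintype α] in
lemma prod_conjL {g : Perm α} {L : List (Perm α)} :
    (conjL g L).prod = g * L.prod * g⁻¹ := by
  induction L with
  | nil => simp [conjL]
  | cons t L ih =>
    simp only [conjL, List.map_cons, List.prod_cons] at ih ⊢
    rw [ih]
    group

omit [DecidableEq α] [Fintype α] in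
lemma conjL_conjL_inv {g : Perm α} {L : List (Perm α)} : conjL g (conjL g⁻¹ L) = L := by
  simp only [conjL, List.map_map]
  have : ((fun τ => g * τ * g⁻¹) ∘ fun τ => g⁻¹ * τ * g⁻¹⁻¹) = id := by
    funext τ
    simp only [Function.comp_apply, id_eq, inv_inv]
    group
  rw [this, List.map_id]

lemma isSwap_conj {g τ : Perm α} (h : τ.IsSwap) : (g * τ * g⁻¹).IsSwap := by
  obtain ⟨a, b, hab, rfl⟩ := h
  exact ⟨g a, g b, fun he => hab (g.injective he), (Equiv.swap_apply_apply g a b).symm⟩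

omit [DecidableEq α] [Fintype α] in
lemma conjL_injective {g : Perm α} : Function.Injective (conjL g) := by
  apply List.map_injective_iff.2
  intro τ τ' h
  have h2 : g * τ * g⁻¹ = g * τ' * g⁻¹ := h
  exact mul_left_cancel (mul_right_cancel h2)

section FinPart
variable (m : ℕ)

lemma finRotate_pow_zero (k : ℕ) (hk : k < m + 2) :
    ((finRotate (m+2)) ^ k) (0 : Fin (m+2)) = ⟨k, hk⟩ := by
  induction k with
  | zero =>
    rw [pow_zero]
    exact Fin.ext rfl
  | succ k ih =>
    rw [pow_succ_apply, ih (by omega)]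
    rw [finRotate_succ_apply]
    apply Fin.ext
    rw [Fin.val_add, Fin.val_one]
    simp only []
    exact Nat.mod_eq_of_lt hk

/-- Full cycles on `Fin (m+2)`. -/
def CycT : Type _ := {c : Perm (Fin (m+2)) // cnt c = 1}

instance : Finite (CycT m) := Subtype.finite

lemma cnt_finRotate : cnt (finRotate (m+2)) = 1 :=
  cnt_eq_one_of_all (all_sameCycle_of_full isCycle_finRotate support_finRotate)

lemma exists_gconj (c : CycT m) :
    ∃ g : Perm (Fin (m+2)), g * finRotate (m+2) * g⁻¹ = c.1 := by
  have hfull := full_of_cnt_eq_one (by rw [Fintype.card_fin]; omega) c.2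
  have h1 : (finRotate (m+2)).cycleType = {m+2} := cycleType_finRotate
  have h2 : c.1.cycleType = {m+2} := by
    rw [hfull.1.cycleType, hfull.2]
    simp [Finset.card_univ]
  exact isConj_iff.1 (Equiv.Perm.isConj_of_cycleType_eq (h1.trans h2.symm))

noncomputable def gconj (c : CycT m) : Perm (Fin (m+2)) :=
  Classical.choose (exists_gconj m c)

lemma gconj_spec (c : CycT m) :
    gconj m c * finRotate (m+2) * (gconj m c)⁻¹ = c.1 :=
  Classical.choose_spec (exists_gconj m c)

lemma eq_one_of_commute_fix {z : Perm (Fin (m+2))}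
    (hcomm : z * finRotate (m+2) = finRotate (m+2) * z) (hz0 : z 0 = 0) : z = 1 := by
  apply Equiv.ext
  intro x
  have hx : ((finRotate (m+2)) ^ (x.val)) (0 : Fin (m+2)) = x := by
    rw [finRotate_pow_zero m x.val x.isLt]
  have hck : z * (finRotate (m+2)) ^ (x.val) = (finRotate (m+2)) ^ (x.val) * z :=
    Commute.pow_right hcomm x.val
  have hkey : z (((finRotate (m+2)) ^ (x.val)) 0) = ((finRotate (m+2)) ^ (x.val)) (z 0) := by
    rw [← Perm.mul_apply, hck, Perm.mul_apply]
  rw [hx, hz0, hx] at hkey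
  rw [hkey]
  rfl

lemma card_CycT : Nat.card (CycT m) = (m+1).factorial := by
  classical
  have key : ∀ h : Perm (Fin (m+2)), h 0 = (Equiv.Perm.decomposeFin h).1 := by
    intro h
    have := Equiv.Perm.decomposeFin_symm_apply_zero
      (Equiv.Perm.decomposeFin h).1 (Equiv.Perm.decomposeFin h).2
    rwa [Prod.mk.eta, Equiv.symm_apply_apply] at this
  have e1 : {h : Perm (Fin (m+2)) // h 0 = 0}
      ≃ {pe : Fin (m+2) × Perm (Fin (m+1)) // pe.1 = 0} :=
    Equiv.Perm.decomposeFin.subtypeEquiv (fun h => by rw [key h])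
  have e2 : {pe : Fin (m+2) × Perm (Fin (m+1)) // pe.1 = 0} ≃ Perm (Fin (m+1)) :=
    { toFun := fun x => x.1.2
      invFun := fun e => ⟨(0, e), rfl⟩
      left_inv := fun x => by
        apply Subtype.ext
        exact Prod.ext x.2.symm rfl
      right_inv := fun e => rfl }
  have hcard0 : Nat.card {h : Perm (Fin (m+2)) // h 0 = 0} = (m+1).factorial := by
    rw [Nat.card_congr (e1.trans e2), Nat.card_eq_fintype_card, Fintype.card_perm,
      Fintype.card_fin]
  rw [← hcard0]
  refine (Nat.card_congr (Equiv.ofBijective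
    (fun h : {h : Perm (Fin (m+2)) // h 0 = 0} =>
      (⟨h.1 * finRotate (m+2) * h.1⁻¹, cnt_conj_one h.1 (cnt_finRotate m)⟩ : CycT m))
    ⟨?_, ?_⟩)).symm
  · rintro ⟨h, h0⟩ ⟨h', h0'⟩ heq
    have heq' : h * finRotate (m+2) * h⁻¹ = h' * finRotate (m+2) * h'⁻¹ :=
      congrArg Subtype.val heq
    set z := h'⁻¹ * h with hz
    have hcomm : z * finRotate (m+2) = finRotate (m+2) * z := by
      have h1 : z * finRotate (m+2) * z⁻¹ = finRotate (m+2) := by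
        rw [hz]
        have : h'⁻¹ * (h * finRotate (m+2) * h⁻¹) * h'
            = h'⁻¹ * (h' * finRotate (m+2) * h'⁻¹) * h' := by rw [heq']
        calc h'⁻¹ * h * finRotate (m+2) * (h'⁻¹ * h)⁻¹
            = h'⁻¹ * (h * finRotate (m+2) * h⁻¹) * h' := by group
          _ = h'⁻¹ * (h' * finRotate (m+2) * h'⁻¹) * h' := this
          _ = finRotate (m+2) := by group
      calc z * finRotate (m+2) = (z * finRotate (m+2) * z⁻¹) * z := by group
        _ = finRotate (m+2) * z := by rw [h1]
    have hz0 : z (0 : Fin (m+2)) = 0 := by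
      have hinv : h'⁻¹ (0 : Fin (m+2)) = 0 := by
        apply h'.injective
        rw [show h' (h'⁻¹ 0) = 0 from Equiv.apply_symm_apply h' 0, h0']
      show (h'⁻¹ * h) (0 : Fin (m+2)) = 0
      rw [Perm.mul_apply, h0, hinv]
    have hz1 : z = 1 := eq_one_of_commute_fix m hcomm hz0
    have : h = h' := by
      have := hz1
      rw [hz] at this
      calc h = h' * (h'⁻¹ * h) := by group
        _ = h' * 1 := by rw [this]
        _ = h' := mul_one h'
    exact Subtype.ext this
  · rintro ⟨c, hc⟩
    obtain ⟨g, hg⟩ := exists_gconj m ⟨c, hc⟩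
    refine ⟨⟨g * (finRotate (m+2)) ^ (((g⁻¹ : Perm (Fin (m+2))) 0).val), ?_⟩, ?_⟩
    · rw [Perm.mul_apply, finRotate_pow_zero m _ (Fin.isLt _), Fin.eta]
      exact Equiv.apply_symm_apply g 0
    · apply Subtype.ext
      show _ = c
      have hg' : g * finRotate (m+2) * g⁻¹ = c := hg
      rw [← hg']
      set k := ((g⁻¹ : Perm (Fin (m+2))) 0).val
      have hcp : Commute ((finRotate (m+2)) ^ k) (finRotate (m+2)) :=
        (Commute.refl (finRotate (m+2))).pow_left k
      calc g * (finRotate (m+2)) ^ k * finRotate (m+2) * (g * (finRotate (m+2)) ^ k)⁻¹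
          = g * ((finRotate (m+2)) ^ k * finRotate (m+2) * ((finRotate (m+2)) ^ k)⁻¹) * g⁻¹ := by
            group
        _ = g * finRotate (m+2) * g⁻¹ := by
            rw [hcp.eq]
            group

/-- The target set of the theorem. -/
def Tset : Type _ := {L : List (Perm (Fin (m+2))) //
  L.length = m + 2 - 1 ∧ (∀ τ ∈ L, τ.IsSwap) ∧ L.prod = finRotate (m+2)}

instance : Finite (Tset m) := finite_sub _ (fun _ h => h.1)

lemma card_Sfull_eq : Nat.card (Sfull (Fin (m+2)))
    = Nat.card (CycT m) * Nat.card (Tset m) := by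
  classical
  rw [← Nat.card_prod]
  apply Nat.card_congr
  symm
  refine Equiv.ofBijective (fun x : CycT m × Tset m =>
    (⟨conjL (gconj m x.1) x.2.1, ⟨?_, ?_⟩, ?_⟩ : Sfull (Fin (m+2)))) ⟨?_, ?_⟩
  · rintro τ hτ
    obtain ⟨τ₀, hτ₀, rfl⟩ := List.mem_map.1 hτ
    exact isSwap_conj (x.2.2.2.1 τ₀ hτ₀)
  · rw [prod_conjL, x.2.2.2.2, gconj_spec]
    exact x.1.2
  · rw [conjL, List.length_map, x.2.2.1, Fintype.card_fin]
  · rintro ⟨c, L⟩ ⟨c', L'⟩ heq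
    have heq' : conjL (gconj m c) L.1 = conjL (gconj m c') L'.1 :=
      congrArg Subtype.val heq
    have hprod : c.1 = c'.1 := by
      have h1 : (conjL (gconj m c) L.1).prod = c.1 := by
        rw [prod_conjL, L.2.2.2, gconj_spec]
      have h2 : (conjL (gconj m c') L'.1).prod = c'.1 := by
        rw [prod_conjL, L'.2.2.2, gconj_spec]
      rw [← h1, ← h2, heq']
    have hcc : c = c' := Subtype.ext hprod
    subst hcc
    have hLL : L.1 = L'.1 := conjL_injective heq'
    rw [Prod.mk.injEq]
    exact ⟨rfl, Subtype.ext hLL⟩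
  · rintro ⟨M, ⟨hsw, hcnt⟩, hlen⟩
    set c : CycT m := ⟨M.prod, hcnt⟩ with hcdef
    set g := gconj m c with hgdef
    have hg : g * finRotate (m+2) * g⁻¹ = M.prod := gconj_spec m c
    refine ⟨⟨c, ⟨conjL g⁻¹ M, ?_, ?_, ?_⟩⟩, ?_⟩
    · rw [conjL, List.length_map, hlen, Fintype.card_fin]
    · rintro τ hτ
      obtain ⟨τ₀, hτ₀, rfl⟩ := List.mem_map.1 hτ
      exact isSwap_conj (hsw τ₀ hτ₀)
    · rw [prod_conjL, ← hg]
      group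
    · apply Subtype.ext
      show conjL g (conjL g⁻¹ M) = M
      exact conjL_conjL_inv

lemma main_count : Nat.card (Tset m) = (m+2) ^ m := by
  classical
  have hN : Fintype.card (Fin (m+2)) = m + 2 := Fintype.card_fin _
  have h1 : Nat.card (Vset (Fin (m+2)) (m + 2 - 1))
      = (m+2) ^ (m+2-1) * (m+2-1).factorial :=
    card_Vset_top (m+2) hN (by omega)
  have h2 := card_Vset_eq_Sfull (α := Fin (m+2))
  rw [hN] at h2
  have h3 := card_Sfull_eq m
  rw [card_CycT] at h3
  have h4 : (m+1).factorial * Nat.card (Tset m) * (m+2)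
      = (m+2) ^ (m+1) * (m+1).factorial := by
    have hh : m + 2 - 1 = m + 1 := by omega
    rw [hh] at h1 h2
    rw [← h1, h2, h3]
  have h5 : (m+2) ^ (m+1) = (m+2) ^ m * (m+2) := pow_succ _ _
  rw [h5] at h4
  have h6 : (m+1).factorial * Nat.card (Tset m) = (m+2) ^ m * (m+1).factorial := by
    have hne : (m+2) ≠ 0 := by omega
    apply Nat.eq_of_mul_eq_mul_right (show 0 < m + 2 by omega)
    calc (m+1).factorial * Nat.card (Tset m) * (m+2) = (m+2) ^ m * (m+2) * (m+1).factorial := h4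
      _ = (m+2) ^ m * (m+1).factorial * (m+2) := by ring
  rw [mul_comm ((m+2)^m) ((m+1).factorial)] at h6
  exact Nat.eq_of_mul_eq_mul_left (Nat.factorial_pos _) h6

end FinPart

end Denes

/-- the number of tuples `(τ_{n-1},…,τ_1)` of transpositions of `{1,…,n}`
with `τ_{n-1} ∘ ⋯ ∘ τ_1 = (1 2 ⋯ n)` equals `n^(n-2)`. -/
theorem stmt_5 (n : ℕ) (hn : 2 ≤ n) :
    Nat.card {L : List (Equiv.Perm (Fin n)) //
      L.length = n - 1 ∧ (∀ τ ∈ L, τ.IsSwap) ∧ L.prod = finRotate n} = n ^ (n - 2) := by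
  obtain ⟨m, rfl⟩ : ∃ m, n = m + 2 := ⟨n - 2, by omega⟩
  have h2 : m + 2 - 2 = m := by omega
  rw [h2]
  exact Denes.main_count m
end

section
/- Let N ≥ 1, let a : ℤ/N → ℝ be any function, and let x ∈ ℝ be a real number not in the range of a. Let d = #{ i ∈ ℤ/N : a(i−1) ≥ a(i) } be the number of descents of the cyclic list (a(0),…,a(N−1)). Then there are exactly d indices i ∈ ℤ/N for which the cyclic triple ⟨a(i−1), x, a(i)⟩ is nondecreasing, i.e. for which ( a(i−1) < x and x < a(i) ) or ( x > a(i−1) and a(i−1) ≥ a(i) ) or ( a(i−1) ≥ a(i) and a(i) > x ). -/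
/-- cyclic lemma: let `a : ℤ/N → ℝ` and let `x ∈ ℝ` not be in the range of
`a`. Then the number of indices `i` for which the cyclic triple `⟨a(i-1), x, a(i)⟩` is
nondecreasing equals the number `d` of descents of the cyclic list, i.e. of indices `i`
with `a(i-1) ≥ a(i)`. -/
theorem stmt_15 (N : ℕ) (hN : 1 ≤ N) (a : ZMod N → ℝ) (x : ℝ)
    (hx : x ∉ Set.range a) :
    Nat.card {i : ZMod N //
        (a (i - 1) < x ∧ x < a i) ∨
        (x > a (i - 1) ∧ a (i - 1) ≥ a i) ∨
        (a (i - 1) ≥ a i ∧ a i > x)} =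
      Nat.card {i : ZMod N // a (i - 1) ≥ a i} := by
  haveI : NeZero N := ⟨by omega⟩
  classical
  have hne : ∀ i : ZMod N, a i ≠ x := fun i h => hx ⟨i, h⟩
  rw [Nat.card_eq_fintype_card, Nat.card_eq_fintype_card,
    Fintype.card_subtype, Fintype.card_subtype]
  set U : Finset (ZMod N) := Finset.univ.filter (fun i => a (i - 1) < x ∧ x < a i) with hU
  set Dn : Finset (ZMod N) := Finset.univ.filter (fun i => x < a (i - 1) ∧ a i < x) with hDn
  have hUDn : U.card = Dn.card := by
    have h1 : (Finset.univ.filter (fun i : ZMod N => a (i - 1) < x)).card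
        = (Finset.univ.filter (fun i : ZMod N => a i < x)).card := by
      apply Finset.card_nbij' (fun i => i - 1) (fun i => i + 1) <;> simp [Set.MapsTo, Set.LeftInvOn, Set.RightInvOn]
    have h2 : (Finset.univ.filter (fun i : ZMod N => a (i - 1) < x))
        = (Finset.univ.filter (fun i : ZMod N => a (i - 1) < x ∧ a i < x)) ∪ U := by
      ext i
      simp only [hU, Finset.mem_filter, Finset.mem_union, Finset.mem_univ, true_and]
      rcases (hne i).lt_or_gt with h | h <;> tauto
    have h3 : (Finset.univ.filter (fun i : ZMod N => a i < x))
        = (Finset.univ.filter (fun i : ZMod N => a (i - 1) < x ∧ a i < x)) ∪ Dn := by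
      ext i
      simp only [hDn, Finset.mem_filter, Finset.mem_union, Finset.mem_univ, true_and]
      rcases (hne (i - 1)).lt_or_gt with h | h <;> tauto
    have d2 : Disjoint (Finset.univ.filter (fun i : ZMod N => a (i - 1) < x ∧ a i < x)) U := by
      rw [Finset.disjoint_left]
      intro i hi hj
      simp only [hU, Finset.mem_filter] at hi hj
      exact absurd hj.2.2 (not_lt.2 hi.2.2.le)
    have d3 : Disjoint (Finset.univ.filter (fun i : ZMod N => a (i - 1) < x ∧ a i < x)) Dn := by
      rw [Finset.disjoint_left]
      intro i hi hj
      simp only [hDn, Finset.mem_filter] at hi hj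
      exact absurd hj.2.1 (not_lt.2 hi.2.1.le)
    rw [h2, h3, Finset.card_union_of_disjoint d2, Finset.card_union_of_disjoint d3] at h1
    omega
  have key : (Finset.univ.filter (fun i : ZMod N =>
        (a (i - 1) < x ∧ x < a i) ∨ (x > a (i - 1) ∧ a (i - 1) ≥ a i) ∨
        (a (i - 1) ≥ a i ∧ a i > x))) \ U
      = (Finset.univ.filter (fun i : ZMod N => a (i - 1) ≥ a i)) \ Dn := by
    ext i
    simp only [hU, hDn, Finset.mem_sdiff, Finset.mem_filter, Finset.mem_univ, true_and,
      not_and, not_lt, ge_iff_le, gt_iff_lt]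
    rcases (hne (i-1)).lt_or_gt with h1 | h1 <;> rcases (hne i).lt_or_gt with h2 | h2 <;>
      constructor <;> rintro ⟨hp, hq⟩ <;>
      refine ⟨?_, fun u => ?_⟩ <;>
      first
        | linarith
        | linarith [hq h1]
        | linarith [hq h2]
        | (rcases hp with ⟨c1, c2⟩ | ⟨c1, c2⟩ | ⟨c1, c2⟩ <;> linarith)
        | (left; exact ⟨h1, h2⟩)
        | (right; left; exact ⟨h1, hp⟩)
        | (right; right; exact ⟨hp, h2⟩)
  have hUsub : U ⊆ Finset.univ.filter (fun i : ZMod N =>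
      (a (i - 1) < x ∧ x < a i) ∨ (x > a (i - 1) ∧ a (i - 1) ≥ a i) ∨
      (a (i - 1) ≥ a i ∧ a i > x)) := by
    intro i hi
    simp only [hU, Finset.mem_filter] at hi ⊢
    exact ⟨hi.1, Or.inl hi.2⟩
  have hDsub : Dn ⊆ Finset.univ.filter (fun i : ZMod N => a (i - 1) ≥ a i) := by
    intro i hi
    simp only [hDn, Finset.mem_filter] at hi ⊢
    exact ⟨hi.1, by linarith [hi.2.1, hi.2.2]⟩
  have e1 := Finset.card_sdiff_add_card_eq_card hUsub
  have e2 := Finset.card_sdiff_add_card_eq_card hDsub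
  have := congrArg Finset.card key
  omega
end

section
/- Let n ≥ 1, r ≥ 0, and let σ_1,…,σ_r be permutations of {1,…,n} such that the subgroup they generate acts transitively on {1,…,n}; set π = σ_r∘⋯∘σ_1. Then there exists a nonnegative integer g (the genus) such that n·r − Σ_{j=1}^r c(σ_j) = n + c(π) − 2 + 2g; in particular, n·r − Σ_{j=1}^r c(σ_j) ≥ n + c(π) − 2. -/
open Equiv Equiv.Perm

variable {n : ℕ}

/-- Number of orbits of a permutation of `{1,…,n}` (fixed points count as orbits). -/
noncomputable def orbCount {n : ℕ} (π : Equiv.Perm (Fin n)) : ℕ :=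
  π.cycleType.card + (n - π.support.card)

/-- The same-cycle setoid of a permutation. -/
def scSetoid (π : Perm (Fin n)) : Setoid (Fin n) :=
  ⟨π.SameCycle, ⟨fun x => SameCycle.refl π x, SameCycle.symm, SameCycle.trans⟩⟩

lemma orbCount_eq_card (π : Perm (Fin n)) :
    orbCount π = Nat.card (Quotient (scSetoid π)) := by
  classical
  have hwd : ∀ x y : Fin n, π.SameCycle x y →
      (if h : π x = x then (Sum.inr ⟨x, h⟩ : ↥π.cycleFactorsFinset ⊕ {x : Fin n // π x = x})
       else Sum.inl ⟨π.cycleOf x, cycleOf_mem_cycleFactorsFinset_iff.2 (mem_support.2 h)⟩) =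
      (if h : π y = y then (Sum.inr ⟨y, h⟩)
       else Sum.inl ⟨π.cycleOf y, cycleOf_mem_cycleFactorsFinset_iff.2 (mem_support.2 h)⟩) := by
    intro x y hxy
    by_cases hx : π x = x
    · have : y = x := by
        obtain ⟨i, hi⟩ := hxy
        rw [← hi, zpow_apply_eq_self_of_apply_eq_self hx]
      subst this; rfl
    · have hy : ¬ π y = y := by
        intro hy
        have hxy2 : x = y := by
          obtain ⟨i, hi⟩ := hxy.symm
          rw [← hi, zpow_apply_eq_self_of_apply_eq_self hy]
        exact hx (hxy2 ▸ hy)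
      rw [dif_neg hx, dif_neg hy]
      exact congrArg _ (Subtype.ext (hxy.cycleOf_eq))
  let f : Quotient (scSetoid π) → (↥π.cycleFactorsFinset ⊕ {x : Fin n // π x = x}) :=
    Quotient.lift _ hwd
  have hbij : Function.Bijective f := by
    constructor
    · rintro ⟨x⟩ ⟨y⟩ hf
      change (dite _ _ _ : _ ⊕ _) = dite _ _ _ at hf
      apply Quotient.sound
      by_cases hx : π x = x <;> by_cases hy : π y = y <;>
        simp [hx, hy] at hf
      · exact hf ▸ SameCycle.refl π x
      · -- cycleOf equal, both in support
        have : y ∈ (π.cycleOf x).support := by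
          rw [hf]
          exact mem_support_cycleOf_iff.2 ⟨SameCycle.refl π y, mem_support.2 hy⟩
        exact (mem_support_cycleOf_iff.1 this).1
    · rintro (⟨c, hc⟩ | ⟨x, hx⟩)
      · obtain ⟨x, hx⟩ := (mem_cycleFactorsFinset_iff.1 hc).1.nonempty_support
        have hxs : ¬ π x = x := by
          have := (mem_cycleFactorsFinset_iff.1 hc).2 x hx
          intro h
          exact mem_support.1 hx (this.trans h)
        refine ⟨⟦x⟧, ?_⟩
        change (dite _ _ _ : _ ⊕ _) = _
        rw [dif_neg hxs]
        exact congrArg _ (Subtype.ext (cycle_is_cycleOf hx hc).symm)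
      · exact ⟨⟦x⟧, by change (dite _ _ _ : _ ⊕ _) = _; rw [dif_pos hx]⟩
  rw [Nat.card_congr (Equiv.ofBijective f hbij), Nat.card_sum]
  have h1 : Nat.card ↥π.cycleFactorsFinset = π.cycleType.card := by
    simp [cycleType, Nat.card_eq_fintype_card]
  have h2 : Nat.card {x : Fin n // π x = x} = n - π.support.card := by
    rw [Nat.card_eq_fintype_card, Fintype.card_subtype]
    have := Finset.card_filter_add_card_filter_not (s := (Finset.univ : Finset (Fin n)))
      (p := fun x => π x = x)
    have hsupp' : π.support = Finset.univ.filter (fun x => ¬ π x = x) := by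
      ext z; simp [mem_support]
    have hsupp : π.support.card = (Finset.univ.filter (fun x => ¬ π x = x)).card :=
      congrArg Finset.card hsupp'
    have hcu : (Finset.univ : Finset (Fin n)).card = n := by simp
    omega
  rw [h1, h2, orbCount]

lemma sign_eq_orbCount (π : Perm (Fin n)) :
    (Perm.sign π : ℤ) = (-1) ^ (n + orbCount π) := by
  have h1 := sign_of_cycleType π
  have h2 : (Perm.sign π : ℤ) = (-1 : ℤ) ^ (π.cycleType.sum + π.cycleType.card) := by
    rw [h1]; push_cast; ring
  rw [h2, sum_cycleType]
  have hle : π.support.card ≤ n := by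
    have := Finset.card_le_univ π.support
    simpa using this
  rw [neg_one_pow_eq_pow_mod_two, neg_one_pow_eq_pow_mod_two (n := n + orbCount π)]
  congr 1
  rw [orbCount]
  omega

lemma sc_step {π : Perm (Fin n)} {a b : Fin n} (h : π.SameCycle a b) (z : Fin n) :
    π.SameCycle z ((Equiv.swap a b * π) z) := by
  have hz : π.SameCycle z (π z) := ⟨1, by simp⟩
  rw [Perm.mul_apply]
  by_cases h1 : π z = a
  · rw [h1, swap_apply_left]
    exact (h1 ▸ hz).trans h
  · by_cases h2 : π z = b
    · rw [h2, swap_apply_right]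
      exact (h2 ▸ hz).trans h.symm
    · rw [swap_apply_of_ne_of_ne h1 h2]
      exact hz

lemma F1 {π : Perm (Fin n)} {a b : Fin n} (h : π.SameCycle a b) {x y : Fin n}
    (hxy : (Equiv.swap a b * π).SameCycle x y) : π.SameCycle x y := by
  obtain ⟨i, -, hi⟩ := hxy.exists_pow_eq'
  subst hi
  clear hxy
  induction i with
  | zero => simpa using SameCycle.refl π x
  | succ i ih =>
    rw [pow_succ', Perm.mul_apply]
    exact ih.trans (sc_step h _)

lemma F2 {π : Perm (Fin n)} {a b : Fin n} (h : π.SameCycle a b) {x : Fin n}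
    (hxa : ¬ π.SameCycle x a) {y : Fin n} (hxy : π.SameCycle x y) :
    (Equiv.swap a b * π).SameCycle x y := by
  have claim : ∀ i : ℕ, ((Equiv.swap a b * π) ^ i) x = (π ^ i) x := by
    intro i
    induction i with
    | zero => rfl
    | succ i ih =>
      rw [pow_succ', Perm.mul_apply, ih, Perm.mul_apply,
        show π ((π ^ i) x) = (π ^ (i+1)) x from by rw [pow_succ', Perm.mul_apply]]
      have hne1 : (π ^ (i+1)) x ≠ a := by
        intro hcon
        exact hxa ⟨(i+1 : ℕ), by rw [zpow_natCast]; exact hcon⟩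
      have hne2 : (π ^ (i+1)) x ≠ b := by
        intro hcon
        exact hxa (SameCycle.trans ⟨(i+1 : ℕ), by rw [zpow_natCast]; exact hcon⟩ h.symm)
      rw [swap_apply_of_ne_of_ne hne1 hne2]
  obtain ⟨i, -, hi⟩ := hxy.exists_pow_eq'
  exact ⟨(i : ℤ), by rw [zpow_natCast, claim]; exact hi⟩

lemma F3 {π : Perm (Fin n)} {a b : Fin n} (h : π.SameCycle a b) {x : Fin n}
    (hax : π.SameCycle a x) :
    (Equiv.swap a b * π).SameCycle x a ∨ (Equiv.swap a b * π).SameCycle x b := by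
  set π' := Equiv.swap a b * π with hπ'
  have hππ' : ∀ z, π z = Equiv.swap a b (π' z) := by
    intro z
    rw [hπ', Perm.mul_apply, swap_apply_self]
  obtain ⟨i, -, hi⟩ := hax.exists_pow_eq'
  subst hi
  clear hax
  induction i with
  | zero => left; simpa using SameCycle.refl π' a
  | succ i ih =>
    set z := (π ^ i) a with hz
    have hstep : (π ^ (i+1)) a = π z := by rw [pow_succ', Perm.mul_apply]
    rw [hstep]
    by_cases h1 : π' z = a
    · right
      have : π z = b := by rw [hππ' z, h1, swap_apply_left]
      rw [this]
    · by_cases h2 : π' z = b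
      · left
        have : π z = a := by rw [hππ' z, h2, swap_apply_right]
        rw [this]
      · have : π z = π' z := by rw [hππ' z, swap_apply_of_ne_of_ne h1 h2]
        have hzz : π'.SameCycle z (π z) := this ▸ ⟨1, by simp⟩
        rcases ih with ha | hb
        · exact Or.inl ((hzz.symm).trans ha)
        · exact Or.inr ((hzz.symm).trans hb)

lemma orbCount_le (π : Perm (Fin n)) : orbCount π ≤ n := by
  have h1 : π.cycleType.card ≤ π.cycleType.sum := by
    have : ∀ m : Multiset ℕ, (∀ x ∈ m, 1 ≤ x) → m.card ≤ m.sum := by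
      intro m
      induction m using Multiset.induction_on with
      | empty => simp
      | cons a s ih =>
        intro hm
        rw [Multiset.card_cons, Multiset.sum_cons]
        have := ih (fun x hx => hm x (Multiset.mem_cons_of_mem hx))
        have := hm a (Multiset.mem_cons_self a s)
        omega
    exact this _ fun x hx => le_trans (by norm_num) (two_le_of_mem_cycleType hx)
  have h2 : π.cycleType.sum = π.support.card := sum_cycleType π
  have h3 : π.support.card ≤ n := by simpa using Finset.card_le_univ π.support
  rw [orbCount]; omega

lemma orbCount_swap_mul_sameCycle {π : Perm (Fin n)} {a b : Fin n} (hab : a ≠ b)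
    (h : π.SameCycle a b) :
    orbCount (Equiv.swap a b * π) = orbCount π + 1 := by
  classical
  set π' := Equiv.swap a b * π with hπ'
  -- lower bound: surjection from classes of π' to classes of π
  have le1 : Nat.card (Quotient (scSetoid π)) ≤ Nat.card (Quotient (scSetoid π')) := by
    have hsurj : Function.Surjective
        (Quotient.lift (fun x => (⟦x⟧ : Quotient (scSetoid π)))
          (fun x y hxy => Quotient.sound (F1 h hxy)) :
            Quotient (scSetoid π') → Quotient (scSetoid π)) := by
      intro q
      refine Quotient.inductionOn q (fun x => ⟨⟦x⟧, rfl⟩)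
    exact Nat.card_le_card_of_surjective _ hsurj
  -- upper bound: injection into classes of π plus one extra
  have le2 : Nat.card (Quotient (scSetoid π')) ≤ Nat.card (Quotient (scSetoid π)) + 1 := by
    have hwd : ∀ x y : Fin n, π'.SameCycle x y →
        (if π'.SameCycle x b then (Sum.inr PUnit.unit : Quotient (scSetoid π) ⊕ PUnit.{1})
          else Sum.inl ⟦x⟧) =
        (if π'.SameCycle y b then (Sum.inr PUnit.unit : Quotient (scSetoid π) ⊕ PUnit.{1})
          else Sum.inl ⟦y⟧) := by
      intro x y hxy
      by_cases hxb : π'.SameCycle x b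
      · rw [if_pos hxb, if_pos (hxy.symm.trans hxb)]
      · rw [if_neg hxb, if_neg (fun hyb => hxb (hxy.trans hyb))]
        exact congrArg _ (Quotient.sound (F1 h hxy))
    have hinj : Function.Injective
        (Quotient.lift _ hwd : Quotient (scSetoid π') → Quotient (scSetoid π) ⊕ PUnit.{1}) := by
      rintro ⟨x⟩ ⟨y⟩ hf
      change (ite _ _ _ : _ ⊕ _) = ite _ _ _ at hf
      apply Quotient.sound
      by_cases hxb : π'.SameCycle x b <;> by_cases hyb : π'.SameCycle y b <;>
        simp [hxb, hyb] at hf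
      · exact hxb.trans hyb.symm
      · -- both not related to b in π'; hf : ⟦x⟧ = ⟦y⟧ in Q π
        have hxy : π.SameCycle x y := Quotient.exact hf
        by_cases hxa : π.SameCycle x a
        · rcases F3 h hxa.symm with h1 | h1
          · rcases F3 h (hxa.symm.trans hxy) with h2 | h2
            · exact h1.trans h2.symm
            · exact absurd h2 hyb
          · exact absurd h1 hxb
        · exact F2 h hxa hxy
    have := Nat.card_le_card_of_injective _ hinj
    simpa [Nat.card_sum] using this
  -- parity: the two counts differ
  have hne : orbCount π' ≠ orbCount π := by
    intro heq
    have hs : (Perm.sign π' : ℤ) = -(Perm.sign π : ℤ) := by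
      rw [hπ', Perm.sign_mul, sign_swap hab]
      push_cast; ring
    rw [sign_eq_orbCount, sign_eq_orbCount, heq] at hs
    have : ((-1 : ℤ)) ^ (n + orbCount π) ≠ 0 := pow_ne_zero _ (by norm_num)
    omega
  have e1 := orbCount_eq_card π
  have e2 := orbCount_eq_card π'
  omega

lemma orbCount_swap_mul_not_sameCycle {π : Perm (Fin n)} {a b : Fin n} (hab : a ≠ b)
    (h : ¬ π.SameCycle a b) :
    orbCount π = orbCount (Equiv.swap a b * π) + 1 := by
  have hsc : (Equiv.swap a b * π).SameCycle a b := by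
    have hex : ∃ k, 0 < k ∧ (π ^ k) a = a :=
      ⟨orderOf π, orderOf_pos π, by rw [pow_orderOf_eq_one]; rfl⟩
    set p := Nat.find hex with hp
    obtain ⟨hppos, hpa⟩ := Nat.find_spec hex
    have claim : ∀ i, i < p → ((Equiv.swap a b * π) ^ i) a = (π ^ i) a := by
      intro i
      induction i with
      | zero => intro _; rfl
      | succ i ih =>
        intro hip
        rw [pow_succ', Perm.mul_apply, ih (Nat.lt_of_succ_lt hip), Perm.mul_apply,
          show π ((π ^ i) a) = (π ^ (i+1)) a from by rw [pow_succ', Perm.mul_apply]]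
        have hne1 : (π ^ (i+1)) a ≠ a := by
          intro hcon
          exact (Nat.find_min hex hip) ⟨Nat.succ_pos i, hcon⟩
        have hne2 : (π ^ (i+1)) a ≠ b := by
          intro hcon
          exact h ⟨(i+1 : ℕ), by rw [zpow_natCast]; exact hcon⟩
        rw [swap_apply_of_ne_of_ne hne1 hne2]
    have hfinal : ((Equiv.swap a b * π) ^ p) a = b := by
      obtain ⟨q, hq⟩ : ∃ q, p = q + 1 := ⟨p - 1, by omega⟩
      rw [hq, pow_succ', Perm.mul_apply, claim q (by omega), Perm.mul_apply,
        show π ((π ^ q) a) = (π ^ (q+1)) a from by rw [pow_succ', Perm.mul_apply], ← hq, hp, hpa,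
        swap_apply_left]
    exact ⟨(p : ℤ), by rw [zpow_natCast]; exact hfinal⟩
  have := orbCount_swap_mul_sameCycle hab hsc
  rwa [← mul_assoc, swap_mul_self, one_mul] at this

/-- Orbit relation of the subgroup generated by a set of permutations. -/
def grpRel (S : Set (Perm (Fin n))) (x y : Fin n) : Prop :=
  ∃ g ∈ Subgroup.closure S, g x = y

lemma grpRel_refl (S : Set (Perm (Fin n))) (x : Fin n) : grpRel S x x :=
  ⟨1, Subgroup.one_mem _, rfl⟩

lemma grpRel_symm {S : Set (Perm (Fin n))} {x y : Fin n} (h : grpRel S x y) : grpRel S y x := by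
  obtain ⟨g, hg, hgx⟩ := h
  exact ⟨g⁻¹, Subgroup.inv_mem _ hg, by rw [← hgx]; simp⟩

lemma grpRel_trans {S : Set (Perm (Fin n))} {x y z : Fin n} (h1 : grpRel S x y)
    (h2 : grpRel S y z) : grpRel S x z := by
  obtain ⟨g, hg, hgx⟩ := h1
  obtain ⟨g', hg', hgy⟩ := h2
  exact ⟨g' * g, Subgroup.mul_mem _ hg' hg, by rw [Perm.mul_apply, hgx, hgy]⟩

lemma grpRel_mono {S S' : Set (Perm (Fin n))} (hss : S ⊆ S') {x y : Fin n}
    (h : grpRel S x y) : grpRel S' x y := by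
  obtain ⟨g, hg, hgx⟩ := h
  exact ⟨g, Subgroup.closure_mono hss hg, hgx⟩

def grpSetoid (S : Set (Perm (Fin n))) : Setoid (Fin n) :=
  ⟨grpRel S, ⟨grpRel_refl S, grpRel_symm, grpRel_trans⟩⟩

noncomputable def kap (S : Set (Perm (Fin n))) : ℕ :=
  Nat.card (Quotient (grpSetoid S))

/-- Key structural fact: adding the swap `(a b)` to the generating set only merges
the classes of `a` and `b`. -/
lemma grpRel_insert_cases {S : Set (Perm (Fin n))} {a b : Fin n} {x y : Fin n}
    (h : grpRel (insert (Equiv.swap a b) S) x y) :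
    grpRel S x y ∨ ((grpRel S x a ∨ grpRel S x b) ∧ (grpRel S y a ∨ grpRel S y b)) := by
  obtain ⟨g, hg, hgx⟩ := h
  subst hgx
  set R : Fin n → Fin n → Prop := fun x y =>
    grpRel S x y ∨ ((grpRel S x a ∨ grpRel S x b) ∧ (grpRel S y a ∨ grpRel S y b)) with hR
  have hRrefl : ∀ x, R x x := fun x => Or.inl (grpRel_refl S x)
  have hRsymm : ∀ {x y}, R x y → R y x := by
    rintro x y (h | ⟨h1, h2⟩)
    · exact Or.inl (grpRel_symm h)
    · exact Or.inr ⟨h2, h1⟩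
  have hRtrans : ∀ {x y z}, R x y → R y z → R x z := by
    rintro x y z (h | ⟨h1, h2⟩) (h' | ⟨h1', h2'⟩)
    · exact Or.inl (grpRel_trans h h')
    · exact Or.inr ⟨h1'.imp (grpRel_trans h) (grpRel_trans h), h2'⟩
    · exact Or.inr ⟨h1, h2.imp (grpRel_trans (grpRel_symm h')) (grpRel_trans (grpRel_symm h'))⟩
    · exact Or.inr ⟨h1, h2'⟩
  have key : ∀ g (hg : g ∈ Subgroup.closure (insert (Equiv.swap a b) S)), ∀ x, R x (g x) := by
    intro g hg
    induction hg using Subgroup.closure_induction with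
    | mem τ hτ =>
      intro x
      rcases hτ with rfl | hτ
      · by_cases h1 : x = a
        · subst h1
          rw [swap_apply_left]
          exact Or.inr ⟨Or.inl (grpRel_refl S _), Or.inr (grpRel_refl S _)⟩
        · by_cases h2 : x = b
          · subst h2
            rw [swap_apply_right]
            exact Or.inr ⟨Or.inr (grpRel_refl S _), Or.inl (grpRel_refl S _)⟩
          · rw [swap_apply_of_ne_of_ne h1 h2]
            exact hRrefl x
      · exact Or.inl ⟨τ, Subgroup.subset_closure hτ, rfl⟩
    | one => intro x; exact hRrefl x
    | mul g g' _ _ ihg ihg' =>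
      intro x
      rw [Perm.mul_apply]
      exact hRtrans (ihg' x) (ihg (g' x))
    | inv g _ ihg =>
      intro x
      have := ihg (g⁻¹ x)
      rw [show g (g⁻¹ x) = x from Equiv.apply_symm_apply g x] at this
      exact hRsymm this
  exact key g hg x

lemma kap_le_insert_swap {S : Set (Perm (Fin n))} (a b : Fin n) :
    kap S ≤ kap (insert (Equiv.swap a b) S) + 1 := by
  classical
  set S' := insert (Equiv.swap a b) S with hS'
  have hwd : ∀ x y : Fin n, grpRel S x y →
      (if grpRel S x b then (Sum.inr PUnit.unit : Quotient (grpSetoid S') ⊕ PUnit.{1})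
        else Sum.inl ⟦x⟧) =
      (if grpRel S y b then (Sum.inr PUnit.unit : Quotient (grpSetoid S') ⊕ PUnit.{1})
        else Sum.inl ⟦y⟧) := by
    intro x y hxy
    by_cases hxb : grpRel S x b
    · rw [if_pos hxb, if_pos (grpRel_trans (grpRel_symm hxy) hxb)]
    · rw [if_neg hxb, if_neg (fun hyb => hxb (grpRel_trans hxy hyb))]
      exact congrArg _ (Quotient.sound (grpRel_mono (Set.subset_insert _ _) hxy))
  have hinj : Function.Injective
      (Quotient.lift _ hwd : Quotient (grpSetoid S) → Quotient (grpSetoid S') ⊕ PUnit.{1}) := by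
    rintro ⟨x⟩ ⟨y⟩ hf
    change (ite _ _ _ : _ ⊕ _) = ite _ _ _ at hf
    apply Quotient.sound
    by_cases hxb : grpRel S x b <;> by_cases hyb : grpRel S y b <;> simp [hxb, hyb] at hf
    · exact grpRel_trans hxb (grpRel_symm hyb)
    · have hxy : grpRel S' x y := Quotient.exact hf
      rcases grpRel_insert_cases hxy with h | ⟨h1, h2⟩
      · exact h
      · have hxa : grpRel S x a := h1.resolve_right hxb
        have hya : grpRel S y a := h2.resolve_right hyb
        exact grpRel_trans hxa (grpRel_symm hya)
  have := Nat.card_le_card_of_injective _ hinj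
  simpa [kap, Nat.card_sum] using this

lemma kap_le_insert_of_rel {S : Set (Perm (Fin n))} {a b : Fin n} (hab : grpRel S a b) :
    kap S ≤ kap (insert (Equiv.swap a b) S) := by
  classical
  set S' := insert (Equiv.swap a b) S with hS'
  have hwd : ∀ x y : Fin n, grpRel S x y →
      ((⟦x⟧ : Quotient (grpSetoid S')) = ⟦y⟧) :=
    fun x y hxy => Quotient.sound (grpRel_mono (Set.subset_insert _ _) hxy)
  have hinj : Function.Injective
      (Quotient.lift _ hwd : Quotient (grpSetoid S) → Quotient (grpSetoid S')) := by
    rintro ⟨x⟩ ⟨y⟩ hf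
    apply Quotient.sound
    have hxy : grpRel S' x y := Quotient.exact hf
    rcases grpRel_insert_cases hxy with h | ⟨h1, h2⟩
    · exact h
    · have hxa : grpRel S x a := h1.elim id (fun h => grpRel_trans h (grpRel_symm hab))
      have hya : grpRel S y a := h2.elim id (fun h => grpRel_trans h (grpRel_symm hab))
      exact grpRel_trans hxa (grpRel_symm hya)
  exact Nat.card_le_card_of_injective _ hinj

lemma kap_empty_ge : n ≤ kap (∅ : Set (Perm (Fin n))) := by
  have hinj : Function.Injective (fun x : Fin n => (⟦x⟧ : Quotient (grpSetoid ∅))) := by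
    intro x y hf
    have hxy : grpRel ∅ x y := Quotient.exact hf
    obtain ⟨g, hg, hgx⟩ := hxy
    rw [Subgroup.closure_empty, Subgroup.mem_bot] at hg
    subst hg
    simpa using hgx
  have := Nat.card_le_card_of_injective _ hinj
  simpa [kap] using this

lemma orbCount_one : orbCount (1 : Perm (Fin n)) = n := by
  simp [orbCount]

lemma main_ind (L : List (Perm (Fin n)))
    (hsw : ∀ τ ∈ L, ∃ a b : Fin n, a ≠ b ∧ τ = Equiv.swap a b) :
    n + orbCount L.prod ≤ L.length + 2 * kap {x | x ∈ L} ∧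
      (orbCount L.prod + L.length) % 2 = n % 2 := by
  induction L with
  | nil =>
    have hset : {x : Perm (Fin n) | x ∈ ([] : List (Perm (Fin n)))} = ∅ := by
      ext z; simp
    rw [List.prod_nil, orbCount_one, List.length_nil, hset]
    have := kap_empty_ge (n := n)
    omega
  | cons τ L' ih =>
    obtain ⟨a, b, hab, rfl⟩ := hsw τ List.mem_cons_self
    have ih' := ih (fun τ' hτ' => hsw τ' (List.mem_cons_of_mem _ hτ'))
    have hset : {x : Perm (Fin n) | x ∈ Equiv.swap a b :: L'} =
        insert (Equiv.swap a b) {x | x ∈ L'} := by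
      ext z; simp [List.mem_cons]
    rw [List.prod_cons, List.length_cons, hset]
    have hprodmem : L'.prod ∈ Subgroup.closure {x : Perm (Fin n) | x ∈ L'} :=
      Subgroup.list_prod_mem _ (fun τ' hτ' => Subgroup.subset_closure hτ')
    by_cases hsc : (L'.prod).SameCycle a b
    · have hA := orbCount_swap_mul_sameCycle hab hsc
      have hrel : grpRel {x : Perm (Fin n) | x ∈ L'} a b := by
        obtain ⟨i, hi⟩ := hsc
        exact ⟨L'.prod ^ i, Subgroup.zpow_mem _ hprodmem i, hi⟩
      have hk := kap_le_insert_of_rel hrel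
      omega
    · have hB := orbCount_swap_mul_not_sameCycle hab hsc
      have hk := kap_le_insert_swap (S := {x : Perm (Fin n) | x ∈ L'}) a b
      omega

lemma eq_one_of_orbCount {σ : Perm (Fin n)} (h : n ≤ orbCount σ) : σ = 1 := by
  have h2 : σ.cycleType.sum = σ.support.card := sum_cycleType σ
  have h3 : σ.support.card ≤ n := by simpa using Finset.card_le_univ σ.support
  have h1 : 2 * σ.cycleType.card ≤ σ.cycleType.sum := by
    have : ∀ m : Multiset ℕ, (∀ x ∈ m, 2 ≤ x) → 2 * m.card ≤ m.sum := by
      intro m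
      induction m using Multiset.induction_on with
      | empty => simp
      | cons a s ih =>
        intro hm
        rw [Multiset.card_cons, Multiset.sum_cons]
        have := ih (fun x hx => hm x (Multiset.mem_cons_of_mem hx))
        have := hm a (Multiset.mem_cons_self a s)
        omega
    exact this _ fun x hx => two_le_of_mem_cycleType hx
  rw [orbCount] at h
  have hc : σ.cycleType.card = 0 := by omega
  exact card_cycleType_eq_zero.1 hc

lemma decomp : ∀ (k : ℕ) (σ : Perm (Fin n)), n - orbCount σ ≤ k →
    ∃ l : List (Perm (Fin n)), (∀ τ ∈ l, ∃ a b : Fin n, a ≠ b ∧ τ = Equiv.swap a b) ∧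
      l.prod = σ ∧ l.length + orbCount σ = n := by
  intro k
  induction k with
  | zero =>
    intro σ hσ
    have h1 : σ = 1 := eq_one_of_orbCount (by have := orbCount_le σ; omega)
    subst h1
    exact ⟨[], by simp, by simp, by rw [orbCount_one]; simp⟩
  | succ k ih =>
    intro σ hσ
    by_cases h1 : σ = 1
    · subst h1
      exact ⟨[], by simp, by simp, by rw [orbCount_one]; simp⟩
    · have hex : ∃ a : Fin n, σ a ≠ a := by
        by_contra hcon
        push_neg at hcon
        exact h1 (Equiv.ext hcon)
      obtain ⟨a, ha⟩ := hex
      have hab : a ≠ σ a := Ne.symm ha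
      have hsc : σ.SameCycle a (σ a) := ⟨1, by simp⟩
      have hA := orbCount_swap_mul_sameCycle hab hsc
      have hlt : orbCount σ < n := by
        by_contra hcon
        exact h1 (eq_one_of_orbCount (by omega))
      obtain ⟨l', hsw', hprod', hlen'⟩ := ih (Equiv.swap a (σ a) * σ) (by omega)
      refine ⟨Equiv.swap a (σ a) :: l', ?_, ?_, ?_⟩
      · rintro τ hτ
        rcases List.mem_cons.1 hτ with rfl | hτ
        · exact ⟨a, σ a, hab, rfl⟩
        · exact hsw' τ hτ
      · rw [List.prod_cons, hprod', ← mul_assoc, swap_mul_self, one_mul]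
      · rw [List.length_cons]
        omega

/-- if permutations `σ_1,…,σ_r` of `{1,…,n}` generate a transitive subgroup
and `π = σ_r ∘ ⋯ ∘ σ_1`, then there is a nonnegative integer `g` (the genus) with
`n·r - Σ_j c(σ_j) = n + c(π) - 2 + 2g`; in particular `n·r - Σ_j c(σ_j) ≥ n + c(π) - 2`. -/
theorem stmt_18 (n r : ℕ) (hn : 1 ≤ n) (σ : Fin r → Equiv.Perm (Fin n))
    (htrans : ∀ x y : Fin n, ∃ g ∈ Subgroup.closure (Set.range σ), g x = y) :
    (∃ g : ℕ, (n * r : ℤ) - ∑ j : Fin r, (orbCount (σ j) : ℤ) =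
        (n : ℤ) + (orbCount ((List.ofFn σ).reverse.prod) : ℤ) - 2 + 2 * g) ∧
      (n * r : ℤ) - ∑ j : Fin r, (orbCount (σ j) : ℤ) ≥
        (n : ℤ) + (orbCount ((List.ofFn σ).reverse.prod) : ℤ) - 2 := by
  classical
  have hdec := fun j : Fin r => decomp n (σ j) (Nat.sub_le _ _)
  choose l hswap hprod hlen using hdec
  set L : List (Perm (Fin n)) := ((List.ofFn l).reverse).flatten with hL
  have hswL : ∀ τ ∈ L, ∃ a b : Fin n, a ≠ b ∧ τ = Equiv.swap a b := by
    intro τ hτ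
    rw [hL, List.mem_flatten] at hτ
    obtain ⟨s, hs, hτs⟩ := hτ
    rw [List.mem_reverse, List.mem_ofFn] at hs
    obtain ⟨j, rfl⟩ := hs
    exact hswap j τ hτs
  have hprodL : L.prod = (List.ofFn σ).reverse.prod := by
    rw [hL, List.prod_flatten, List.map_reverse, List.map_ofFn,
      show (List.prod ∘ l) = σ from funext hprod]
  have hlenL : L.length = ∑ j : Fin r, (l j).length := by
    rw [hL, List.length_flatten, List.map_reverse, List.map_ofFn, List.sum_reverse,
      List.sum_ofFn]
    rfl
  have hTC : L.length + ∑ j : Fin r, orbCount (σ j) = n * r := by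
    rw [hlenL, ← Finset.sum_add_distrib]
    rw [Finset.sum_congr rfl (fun j _ => hlen j)]
    simp [Finset.sum_const, mul_comm]
  have σmem : ∀ j, σ j ∈ Subgroup.closure {x : Perm (Fin n) | x ∈ L} := by
    intro j
    rw [← hprod j]
    refine Subgroup.list_prod_mem _ (fun τ hτ => Subgroup.subset_closure ?_)
    show τ ∈ L
    rw [hL, List.mem_flatten]
    refine ⟨l j, ?_, hτ⟩
    rw [List.mem_reverse, List.mem_ofFn]
    exact ⟨j, rfl⟩
  have hall : ∀ x y : Fin n, grpRel {x : Perm (Fin n) | x ∈ L} x y := by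
    intro x y
    obtain ⟨g, hg, hgx⟩ := htrans x y
    refine ⟨g, ?_, hgx⟩
    have hle : Subgroup.closure (Set.range σ) ≤ Subgroup.closure {x : Perm (Fin n) | x ∈ L} :=
      Subgroup.closure_le _ |>.2 (by rintro _ ⟨j, rfl⟩; exact σmem j)
    exact hle hg
  have hkap : kap {x : Perm (Fin n) | x ∈ L} ≤ 1 := by
    have hsub : Subsingleton (Quotient (grpSetoid {x : Perm (Fin n) | x ∈ L})) := by
      constructor
      rintro ⟨x⟩ ⟨y⟩
      exact Quotient.sound (hall x y)
    rw [kap]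
    exact Finite.card_le_one_iff_subsingleton.2 hsub
  obtain ⟨hmain1, hmain2⟩ := main_ind L hswL
  have hc : (∑ j : Fin r, (orbCount (σ j) : ℤ)) =
      ((∑ j : Fin r, orbCount (σ j) : ℕ) : ℤ) := by push_cast; rfl
  rw [← hprodL, hc, show ((n:ℤ) * (r:ℤ)) = ((n*r : ℕ) : ℤ) from by push_cast; ring]
  constructor
  · exact ⟨(L.length + 2 - (n + orbCount L.prod)) / 2, by omega⟩
  · omega
end
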